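/- arXiv:1312.2298 — 8 statements merged into one kernel-verified Lean document; each statement's English description precedes it below -/
import Mathlib

section
/- Let ξ be the Cantor measure. Then for every x in the support of ξ, the pointwise dimension D_ξ(x) exists and equals log 2 / log 3. -/
open MeasureTheory Filter Metric Topology ProbabilityTheory

namespace CantorPD


/-- The value of a binary digit sequence under the Cantor coding map. -/
noncomputable def cf (b : ℕ → Bool) : ℝ := ∑' n : ℕ, 2 * ((b n).toNat : ℝ) / 3 ^ (n + 1)

/-- Partial sums of the Cantor coding map. -/
noncomputable def cs (b : ℕ → Bool) (n : ℕ) : ℝ :=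
  ∑ k ∈ Finset.range n, 2 * ((b k).toNat : ℝ) / 3 ^ (k + 1)

lemma term_nonneg (c : Bool) (k : ℕ) : 0 ≤ 2 * ((c).toNat : ℝ) / 3 ^ (k + 1) := by
  positivity

lemma term_le (c : Bool) (k : ℕ) : 2 * ((c).toNat : ℝ) / 3 ^ (k + 1) ≤ 2 / 3 ^ (k + 1) := by
  have : ((c).toNat : ℝ) ≤ 1 := by cases c <;> norm_num
  have h3 : (0:ℝ) < 3 ^ (k+1) := by positivity
  rw [div_le_div_iff₀ h3 h3]
  nlinarith

lemma summable_aux : Summable (fun k : ℕ => 2 / (3:ℝ) ^ (k + 1)) := by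
  have : (fun k : ℕ => 2 / (3:ℝ) ^ (k+1)) = fun k : ℕ => (2/3) * (1/3 : ℝ) ^ k := by
    funext k
    rw [pow_succ]
    field_simp
    rw [← mul_pow]; norm_num
  rw [this]
  exact (summable_geometric_of_lt_one (by norm_num) (by norm_num)).mul_left _

lemma summable_term (b : ℕ → Bool) :
    Summable (fun n : ℕ => 2 * ((b n).toNat : ℝ) / 3 ^ (n + 1)) :=
  Summable.of_nonneg_of_le (fun k => term_nonneg _ _) (fun k => term_le _ _) summable_aux

lemma tsum_aux (n : ℕ) : ∑' k : ℕ, 2 / (3:ℝ) ^ (k + n + 1) = 1 / 3 ^ n := by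
  have : (fun k : ℕ => 2 / (3:ℝ) ^ (k + n + 1)) = fun k : ℕ => (2 / 3 ^ (n+1)) * (1/3 : ℝ) ^ k := by
    funext k
    rw [show k + n + 1 = (n + 1) + k by ring, pow_add]
    rw [div_pow, one_pow]
    field_simp
  rw [this, tsum_mul_left, tsum_geometric_of_lt_one (by norm_num) (by norm_num)]
  rw [pow_succ]
  norm_num
  ring

lemma cs_le_cf (b : ℕ → Bool) (n : ℕ) : cs b n ≤ cf b := by
  have h := (summable_term b).sum_add_tsum_nat_add n
  have ht : 0 ≤ ∑' k : ℕ, 2 * ((b (k + n)).toNat : ℝ) / 3 ^ (k + n + 1) :=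
    tsum_nonneg fun k => term_nonneg _ _
  rw [cf, cs, ← h]
  linarith

lemma cf_le_cs_add (b : ℕ → Bool) (n : ℕ) : cf b ≤ cs b n + 1 / 3 ^ n := by
  have h := (summable_term b).sum_add_tsum_nat_add n
  have hs1 : Summable (fun k : ℕ => 2 * ((b (k + n)).toNat : ℝ) / 3 ^ (k + n + 1)) :=
    (summable_nat_add_iff (f := fun m : ℕ => 2 * ((b m).toNat : ℝ) / 3 ^ (m + 1)) n).mpr
      (summable_term b)
  have hs2 : Summable (fun k : ℕ => 2 / (3:ℝ) ^ (k + n + 1)) :=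
    (summable_nat_add_iff (f := fun m : ℕ => 2 / (3:ℝ) ^ (m + 1)) n).mpr summable_aux
  have ht : ∑' k : ℕ, 2 * ((b (k + n)).toNat : ℝ) / 3 ^ (k + n + 1) ≤ 1 / 3 ^ n := by
    rw [← tsum_aux n]
    exact Summable.tsum_le_tsum (fun k => term_le (b (k+n)) (k+n)) hs1 hs2
  rw [cf, cs, ← h]
  linarith



lemma geom_Ico (m n : ℕ) (h : m ≤ n) :
    ∑ j ∈ Finset.Ico m n, 2 / (3:ℝ) ^ (j + 1) = 1 / 3 ^ m - 1 / 3 ^ n := by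
  induction n, h using Nat.le_induction with
  | base => simp
  | succ n hmn ih =>
    rw [Finset.sum_Ico_succ_top hmn, ih, pow_succ]
    have h3 : (0:ℝ) < 3 ^ n := by positivity
    field_simp
    ring

lemma cs_split (c : ℕ → Bool) (k n : ℕ) (hkn : k < n) :
    cs c n = cs c k + 2 * ((c k).toNat : ℝ) / 3 ^ (k + 1)
      + ∑ j ∈ Finset.Ico (k+1) n, 2 * ((c j).toNat : ℝ) / 3 ^ (j + 1) := by
  rw [cs, cs, Finset.range_eq_Ico,
    ← Finset.sum_Ico_consecutive _ (Nat.zero_le k) hkn.le,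
    Finset.sum_eq_sum_Ico_succ_bot hkn]
  rw [Finset.range_eq_Ico]
  ring

lemma sum_Ico_bounds (c : ℕ → Bool) (k n : ℕ) (hkn : k + 1 ≤ n) :
    0 ≤ ∑ j ∈ Finset.Ico (k+1) n, 2 * ((c j).toNat : ℝ) / 3 ^ (j + 1) ∧
    ∑ j ∈ Finset.Ico (k+1) n, 2 * ((c j).toNat : ℝ) / 3 ^ (j + 1) ≤ 1 / 3 ^ (k+1) - 1 / 3 ^ n := by
  constructor
  · exact Finset.sum_nonneg fun j _ => term_nonneg _ _
  · rw [← geom_Ico (k+1) n hkn]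
    exact Finset.sum_le_sum fun j _ => term_le _ _

lemma cs_sub_ge (a b : ℕ → Bool) (k n : ℕ) (hkn : k < n)
    (hpre : ∀ j, j < k → a j = b j) (hak : a k = true) (hbk : b k = false) :
    2 / 3 ^ n ≤ cs a n - cs b n := by
  have ha := cs_split a k n hkn
  have hb := cs_split b k n hkn
  have hcs : cs a k = cs b k := by
    unfold cs; exact Finset.sum_congr rfl fun j hj => by
      rw [hpre j (Finset.mem_range.mp hj)]
  have hA := sum_Ico_bounds a k n hkn
  have hB := sum_Ico_bounds b k n hkn
  have hpow : (1:ℝ) / 3 ^ n ≤ 1 / 3 ^ (k+1) := by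
    apply div_le_div_of_nonneg_left (by norm_num) (by positivity)
    exact pow_le_pow_right₀ (by norm_num) hkn
  rw [hak] at ha
  rw [hbk] at hb
  simp only [Bool.toNat_true, Bool.toNat_false, Nat.cast_one, Nat.cast_zero] at ha hb
  rw [ha, hb, hcs]
  have e1 : cs b k + 2 * (1:ℝ) / 3 ^ (k + 1)
      + (∑ j ∈ Finset.Ico (k + 1) n, 2 * ((a j).toNat:ℝ) / 3 ^ (j + 1))
      - (cs b k + 2 * 0 / 3 ^ (k + 1)
      + ∑ j ∈ Finset.Ico (k + 1) n, 2 * ((b j).toNat:ℝ) / 3 ^ (j + 1))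
      = 2 / 3 ^ (k + 1)
      + (∑ j ∈ Finset.Ico (k + 1) n, 2 * ((a j).toNat:ℝ) / 3 ^ (j + 1))
      - (∑ j ∈ Finset.Ico (k + 1) n, 2 * ((b j).toNat:ℝ) / 3 ^ (j + 1)) := by ring
  rw [e1]
  have e2 : (2:ℝ) / 3 ^ (k+1) = 1 / 3 ^ (k+1) + 1 / 3 ^ (k+1) := by ring
  have e3 : (2:ℝ) / 3 ^ n = 1 / 3 ^ n + 1 / 3 ^ n := by ring
  rw [e2, e3]
  linarith [hA.1, hB.2, hpow]

lemma cs_sep (a b : ℕ → Bool) (n : ℕ) (hne : ∃ k, k < n ∧ a k ≠ b k) :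
    2 / 3 ^ n ≤ |cs a n - cs b n| := by
  classical
  have hex : ∃ k, a k ≠ b k := ⟨hne.choose, hne.choose_spec.2⟩
  set k := Nat.find hex with hkdef
  have hk : a k ≠ b k := Nat.find_spec hex
  have hkn : k < n := lt_of_le_of_lt (Nat.find_min' hex hne.choose_spec.2) hne.choose_spec.1
  have hpre : ∀ j, j < k → a j = b j := fun j hj => not_not.mp (Nat.find_min hex hj)
  cases ha : a k <;> cases hb : b k
  · rw [ha, hb] at hk; exact absurd rfl hk
  · have := cs_sub_ge b a k n hkn (fun j hj => (hpre j hj).symm) hb ha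
    rw [abs_sub_comm]
    exact this.trans (le_abs_self _)
  · exact (cs_sub_ge a b k n hkn hpre ha hb).trans (le_abs_self _)
  · rw [ha, hb] at hk; exact absurd rfl hk

lemma cylinder_prob {Ω : Type*} [MeasurableSpace Ω] (P : Measure Ω) [IsProbabilityMeasure P]
    (X : ℕ → Ω → Bool) (hindep : iIndepFun X P)
    (hfair : ∀ n, P {ω | X n ω = true} = 1/2 ∧ P {ω | X n ω = false} = 1/2)
    (b : ℕ → Bool) (n : ℕ) :
    P (⋂ k ∈ Finset.range n, X k ⁻¹' {b k}) = (1/2 : ENNReal) ^ n := by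
  have hmeas' : ∀ i ∈ Finset.range n,
      MeasurableSet[(inferInstance : MeasurableSpace Bool).comap (X i)] (X i ⁻¹' {b i}) :=
    fun i _ => ⟨{b i}, trivial, rfl⟩
  rw [hindep.meas_biInter hmeas']
  have hone : ∀ i, P (X i ⁻¹' {b i}) = 1/2 := by
    intro i
    have : X i ⁻¹' {b i} = {ω | X i ω = b i} := rfl
    rw [this]
    cases h : b i
    · rw [h] at *; exact (hfair i).2
    · rw [h] at *; exact (hfair i).1
  simp only [hone, Finset.prod_const, Finset.card_range]


lemma interval_sep {p q u v h : ℝ} (hsep : 2 * h ≤ |p - q|)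
    (hu1 : p ≤ u) (hu2 : u ≤ p + h) (hv1 : q ≤ v) (hv2 : v ≤ q + h) : h ≤ |u - v| := by
  rcases le_total p q with hc | hc
  · have habs : 2 * h ≤ q - p := by rwa [abs_sub_comm, abs_of_nonneg (by linarith)] at hsep
    have h1 : h ≤ v - u := by linarith
    have := le_abs_self (v - u)
    rw [abs_sub_comm]
    linarith
  · have habs : 2 * h ≤ p - q := by rwa [abs_of_nonneg (by linarith)] at hsep
    have h1 : h ≤ u - v := by linarith
    have := le_abs_self (u - v)
    linarith

lemma tendsto_quot (a c L2 L3 : ℝ) (h3 : 0 < L3) :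
    Tendsto (fun n : ℕ => (((n : ℝ) + a) * L2) / ((n : ℝ) * L3 + c)) atTop (𝓝 (L2 / L3)) := by
  have h0 : Tendsto (fun n : ℕ => a / (n : ℝ)) atTop (𝓝 0) :=
    tendsto_const_div_atTop_nhds_zero_nat a
  have h0c : Tendsto (fun n : ℕ => c / (n : ℝ)) atTop (𝓝 0) :=
    tendsto_const_div_atTop_nhds_zero_nat c
  have hnum : Tendsto (fun n : ℕ => (1 + a / (n : ℝ)) * L2) atTop (𝓝 L2) := by
    have := (tendsto_const_nhds (x := (1:ℝ)).add h0).mul_const L2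
    simpa using this
  have hden : Tendsto (fun n : ℕ => L3 + c / (n : ℝ)) atTop (𝓝 L3) := by
    simpa using (tendsto_const_nhds (x := L3)).add h0c
  have hdiv := hnum.div hden h3.ne'
  refine Tendsto.congr' ?_ hdiv
  filter_upwards [eventually_gt_atTop 0] with n hn
  have hn0 : (n : ℝ) ≠ 0 := Nat.cast_ne_zero.mpr hn.ne'
  simp only [Pi.div_apply]
  field_simp


lemma cf_continuous : Continuous cf := by
  apply continuous_tsum (u := fun k : ℕ => 2 / (3:ℝ) ^ (k + 1)) _ summable_aux
  · intro n b
    rw [Real.norm_eq_abs, abs_of_nonneg (term_nonneg _ _)]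
    exact term_le _ _
  · intro n
    have h1 : Continuous (fun b : ℕ → Bool => ((b n).toNat : ℝ)) :=
      (continuous_of_discreteTopology (f := fun c : Bool => ((c.toNat : ℝ)))).comp
        (continuous_apply n)
    exact (continuous_const.mul h1).div_const _


end CantorPD


/-- The Cantor measure, realized as the law of the random series `∑ 2·X_n·3^{-n}` for an
i.i.d. sequence of fair `{0,1}`-valued random variables, has pointwise dimension
`log 2 / log 3` at every point of its support. -/
theorem cantorMeasure_pointwiseDim
    {Ω : Type*} [MeasurableSpace Ω] (P : Measure Ω) [IsProbabilityMeasure P]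
    (X : ℕ → Ω → Bool)
    (hmeas : ∀ n, Measurable (X n))
    (hindep : iIndepFun X P)
    (hfair : ∀ n, P {ω | X n ω = true} = 1/2 ∧ P {ω | X n ω = false} = 1/2)
    (ξ : Measure ℝ)
    (hξ : ξ = P.map (fun ω => ∑' n : ℕ, 2 * ((X n ω).toNat : ℝ) / 3 ^ (n + 1)))
    (x : ℝ) (hx : ∀ ε : ℝ, 0 < ε → 0 < ξ (Metric.ball x ε)) :
    Tendsto (fun ε : ℝ => Real.log (ξ (Metric.ball x ε)).toReal / Real.log ε)
      (𝓝[>] 0) (𝓝 (Real.log 2 / Real.log 3)) := by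
  classical
  set S : Ω → ℝ := fun ω => ∑' n : ℕ, 2 * ((X n ω).toNat : ℝ) / 3 ^ (n + 1) with hSdef
  have hSD : ∀ ω, S ω = CantorPD.cf (fun n => X n ω) := fun ω => rfl
  have hSm : Measurable S :=
    CantorPD.cf_continuous.measurable.comp (measurable_pi_lambda _ fun n => hmeas n)
  have hmap : ∀ A : Set ℝ, MeasurableSet A → ξ A = P (S ⁻¹' A) := by
    intro A hA
    rw [hξ]
    exact Measure.map_apply hSm hA
  -- x is in the range of cf
  have hC : IsCompact (Set.range CantorPD.cf) := isCompact_range CantorPD.cf_continuous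
  have hxC : x ∈ Set.range CantorPD.cf := by
    by_contra hxC
    obtain ⟨ε, hε, hball⟩ := Metric.isOpen_iff.mp hC.isClosed.isOpen_compl x hxC
    have h0 : ξ (Set.range CantorPD.cf)ᶜ = 0 := by
      rw [hmap _ hC.isClosed.measurableSet.compl]
      have : S ⁻¹' (Set.range CantorPD.cf)ᶜ = ∅ := by
        ext ω
        simp only [Set.mem_preimage, Set.mem_compl_iff, Set.mem_range,
          Set.mem_empty_iff_false, iff_false, not_not]
        exact ⟨fun n => X n ω, (hSD ω).symm⟩
      rw [this, measure_empty]
    have : ξ (Metric.ball x ε) = 0 :=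
      le_antisymm ((measure_mono hball).trans h0.le) (zero_le)
    exact absurd (hx ε hε) (by simp [this])
  obtain ⟨b, hb⟩ := hxC
  -- lower bound
  have lower : ∀ n : ℕ, ∀ ε : ℝ, 1 / 3 ^ n < ε →
      (1/2 : ENNReal) ^ n ≤ ξ (Metric.ball x ε) := by
    intro n ε hε
    rw [hmap _ measurableSet_ball,
      ← CantorPD.cylinder_prob P X hindep hfair b n]
    apply measure_mono
    intro ω hω
    have hω' : ∀ k, k < n → X k ω = b k := by
      intro k hk
      have := Set.mem_iInter₂.mp hω k (Finset.mem_range.mpr hk)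
      simpa using this
    have hcs : CantorPD.cs (fun k => X k ω) n = CantorPD.cs b n :=
      Finset.sum_congr rfl fun j hj => by
        have := hω' j (Finset.mem_range.mp hj); simp [this]
    have h1 := CantorPD.cs_le_cf (fun k => X k ω) n
    have h2 := CantorPD.cf_le_cs_add (fun k => X k ω) n
    have h3 := CantorPD.cs_le_cf b n
    have h4 := CantorPD.cf_le_cs_add b n
    have h3n : (0:ℝ) < 1 / 3 ^ n := by positivity
    simp only [Set.mem_preimage, mem_ball, Real.dist_eq, hSD ω, ← hb]
    rw [abs_sub_lt_iff]
    constructor <;> linarith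
  -- upper bound
  have upper : ∀ n : ℕ, ∀ ε : ℝ, 0 < ε → 2 * ε ≤ 1 / 3 ^ n →
      ξ (Metric.ball x ε) ≤ (1/2 : ENNReal) ^ n := by
    intro n ε hε hle
    rw [hmap _ measurableSet_ball]
    rcases Set.eq_empty_or_nonempty (S ⁻¹' Metric.ball x ε) with h | ⟨ω0, hω0⟩
    · rw [h]; simp
    · refine le_trans (measure_mono ?_)
        (le_of_eq (CantorPD.cylinder_prob P X hindep hfair (fun k => X k ω0) n))
      intro ω hω
      apply Set.mem_iInter₂.mpr
      intro k hk
      simp only [Set.mem_preimage, Set.mem_singleton_iff]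
      by_contra hne
      have hsep := CantorPD.cs_sep (fun j => X j ω) (fun j => X j ω0) n
        ⟨k, Finset.mem_range.mp hk, hne⟩
      have h1 := CantorPD.cs_le_cf (fun k => X k ω) n
      have h2 := CantorPD.cf_le_cs_add (fun k => X k ω) n
      have h3 := CantorPD.cs_le_cf (fun k => X k ω0) n
      have h4 := CantorPD.cf_le_cs_add (fun k => X k ω0) n
      have hsep2 : 2 * (1 / 3 ^ n) ≤
          |CantorPD.cs (fun j => X j ω) n - CantorPD.cs (fun j => X j ω0) n| := by
        have : 2 * ((1:ℝ) / 3 ^ n) = 2 / 3 ^ n := by ring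
        rw [this]; exact hsep
      have habs : (1:ℝ) / 3 ^ n ≤ |S ω - S ω0| := by
        rw [hSD ω, hSD ω0]
        exact CantorPD.interval_sep hsep2 h1 h2 h3 h4
      have hd1 : |S ω - x| < ε := by
        have := hω; simp only [Set.mem_preimage, mem_ball, Real.dist_eq] at this; exact this
      have hd2 : |S ω0 - x| < ε := by
        have := hω0; simp only [Set.mem_preimage, mem_ball, Real.dist_eq] at this; exact this
      have htri : |S ω - S ω0| < 2 * ε := by
        have h5 := abs_sub_le (S ω) x (S ω0)
        rw [abs_sub_comm x (S ω0)] at h5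
        linarith
      linarith [habs, htri, hle]
    -- the limit
  have hL2p : 0 < Real.log 2 := Real.log_pos (by norm_num)
  have hL3p : 0 < Real.log 3 := Real.log_pos (by norm_num)
  set L2 := Real.log 2 with hL2
  set L3 := Real.log 3 with hL3
  set nn : ℝ → ℕ := fun ε => ⌊Real.logb 3 (1 / (2 * ε))⌋₊ with hnn
  have key : ∀ ε : ℝ, ε ∈ Set.Ioo (0:ℝ) (1/6) →
      ((nn ε : ℝ)) * L2 / (((nn ε : ℝ) + 1) * L3 + L2)
        ≤ Real.log (ξ (Metric.ball x ε)).toReal / Real.log ε ∧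
      Real.log (ξ (Metric.ball x ε)).toReal / Real.log ε
        ≤ ((nn ε : ℝ) + 2) * L2 / ((nn ε : ℝ) * L3 + L2) := by
    rintro ε ⟨hε0, hε6⟩
    set n := nn ε with hn
    have h2e : (0:ℝ) < 2 * ε := by linarith
    have hbig : (1:ℝ) ≤ 1 / (2 * ε) := by
      rw [le_div_iff₀ h2e]; linarith
    have hfl1 : (n : ℝ) ≤ Real.logb 3 (1 / (2 * ε)) :=
      Nat.floor_le (Real.logb_nonneg (by norm_num) hbig)
    have hfl2 : Real.logb 3 (1 / (2 * ε)) < (n : ℝ) + 1 := Nat.lt_floor_add_one _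
    have h1 : (3:ℝ) ^ n ≤ 1 / (2 * ε) := by
      have h := Real.rpow_le_rpow_of_exponent_le (by norm_num : (1:ℝ) ≤ 3) hfl1
      rwa [Real.rpow_natCast,
        Real.rpow_logb (by norm_num) (by norm_num) (by positivity)] at h
    have h2 : 1 / (2 * ε) < (3:ℝ) ^ (n + 1) := by
      have h := Real.rpow_lt_rpow_of_exponent_lt (by norm_num : (1:ℝ) < 3) hfl2
      rw [Real.rpow_logb (by norm_num) (by norm_num) (by positivity)] at h
      calc 1 / (2*ε) < (3:ℝ) ^ ((n:ℝ) + 1) := h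
        _ = 3 ^ (n + 1) := by
            rw [← Real.rpow_natCast 3 (n+1)]; push_cast; ring_nf
    have h3n : (0:ℝ) < 3 ^ n := by positivity
    have h3n1 : (0:ℝ) < 3 ^ (n+1) := by positivity
    have h3n2 : (0:ℝ) < 3 ^ (n+2) := by positivity
    -- measure bounds
    have hup : ξ (Metric.ball x ε) ≤ (1/2 : ENNReal) ^ n := by
      apply upper n ε hε0
      have h' := (le_div_iff₀ h2e).mp h1
      rw [le_div_iff₀ h3n]
      nlinarith
    have hlo : (1/2 : ENNReal) ^ (n + 2) ≤ ξ (Metric.ball x ε) := by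
      apply lower (n+2) ε
      have h' := (div_lt_iff₀ h2e).mp h2
      rw [div_lt_iff₀ h3n2]
      have e32 : (3:ℝ) ^ (n+2) = 3 * 3 ^ (n+1) := by ring
      nlinarith [mul_pos hε0 h3n1]
    -- real versions
    have hfin : ξ (Metric.ball x ε) ≠ ⊤ :=
      ne_top_of_le_ne_top (ENNReal.pow_ne_top (by norm_num)) hup
    set r := (ξ (Metric.ball x ε)).toReal with hr
    have htr : ∀ m : ℕ, ((1/2 : ENNReal) ^ m).toReal = (1/2 : ℝ) ^ m := by
      intro m; rw [ENNReal.toReal_pow]; norm_num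
    have hrup : r ≤ (1/2 : ℝ) ^ n := by
      have := ENNReal.toReal_mono (ENNReal.pow_ne_top (by norm_num)) hup
      rwa [htr n] at this
    have hrlo : (1/2 : ℝ) ^ (n+2) ≤ r := by
      have := ENNReal.toReal_mono hfin hlo
      rwa [htr (n+2)] at this
    have hr0 : 0 < r := lt_of_lt_of_le (by positivity) hrlo
    have hhalf : Real.log ((1/2 : ℝ)) = -L2 := by
      rw [one_div, Real.log_inv, hL2]
    -- log r bounds
    have hlogr_up : Real.log r ≤ -((n:ℝ) * L2) := by
      have := Real.log_le_log hr0 hrup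
      rwa [Real.log_pow, hhalf, mul_neg] at this
    have hlogr_lo : -(((n:ℝ) + 2) * L2) ≤ Real.log r := by
      have := Real.log_le_log (by positivity) hrlo
      rw [Real.log_pow, hhalf, mul_neg] at this
      push_cast at this ⊢
      linarith
    -- log ε bounds
    have hloginv : Real.log (1 / (2 * ε)) = -(L2 + Real.log ε) := by
      rw [one_div, Real.log_inv, Real.log_mul two_ne_zero hε0.ne', hL2]
    have hlogε_up : (n:ℝ) * L3 + L2 ≤ -Real.log ε := by
      have := Real.log_le_log h3n h1
      rw [Real.log_pow, hloginv, ← hL3] at this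
      linarith
    have hlogε_lo : -Real.log ε < ((n:ℝ) + 1) * L3 + L2 := by
      have := Real.log_lt_log (by positivity) h2
      rw [Real.log_pow, hloginv, ← hL3] at this
      push_cast at this
      linarith
    have hBpos : 0 < -Real.log ε := by
      have : (0:ℝ) ≤ (n:ℝ) * L3 := by positivity
      linarith
    have hApos : 0 ≤ -Real.log r := by
      have : (0:ℝ) ≤ (n:ℝ) * L2 := by positivity
      linarith
    rw [show Real.log r / Real.log ε = -Real.log r / -Real.log ε from
      (neg_div_neg_eq _ _).symm]
    constructor
    · apply div_le_div₀ hApos (by linarith) (by positivity) hlogε_lo.le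
    · apply div_le_div₀ (by positivity) (by linarith) (by positivity) hlogε_up
  -- tendsto statements
  have hUtend : Tendsto (fun m : ℕ => ((m:ℝ) + 2) * L2 / ((m:ℝ) * L3 + L2))
      atTop (𝓝 (L2 / L3)) := CantorPD.tendsto_quot 2 L2 L2 L3 hL3p
  have hLtend : Tendsto (fun m : ℕ => (m:ℝ) * L2 / (((m:ℝ) + 1) * L3 + L2))
      atTop (𝓝 (L2 / L3)) := by
    have h := CantorPD.tendsto_quot 0 (L3 + L2) L2 L3 hL3p
    refine h.congr fun m => ?_
    rw [add_zero]
    congr 1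
    ring
  have h2ε : Tendsto (fun ε : ℝ => 2 * ε) (𝓝[>] 0) (𝓝[>] 0) := by
    apply tendsto_nhdsWithin_of_tendsto_nhds_of_eventually_within
    · have h : Tendsto (fun ε : ℝ => 2 * ε) (𝓝 0) (𝓝 0) := by
        have hc : Continuous fun ε : ℝ => (2:ℝ) * ε := continuous_const.mul continuous_id
        simpa using hc.tendsto 0
      exact h.mono_left nhdsWithin_le_nhds
    · filter_upwards [self_mem_nhdsWithin] with ε hε
      exact mul_pos two_pos (Set.mem_Ioi.mp hε)
  have hlogtend : Tendsto (fun ε : ℝ => Real.logb 3 (1 / (2 * ε))) (𝓝[>] 0) atTop := by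
    have h := (Real.tendsto_logb_atTop (by norm_num : (1:ℝ) < 3)).comp
      (tendsto_inv_nhdsGT_zero.comp h2ε)
    refine h.congr fun ε => ?_
    simp only [Function.comp_apply, one_div]
  have hnntend : Tendsto nn (𝓝[>] (0:ℝ)) atTop := tendsto_nat_floor_atTop.comp hlogtend
  refine tendsto_of_tendsto_of_tendsto_of_le_of_le' (hLtend.comp hnntend)
    (hUtend.comp hnntend) ?_ ?_
  · filter_upwards [Ioo_mem_nhdsGT (by norm_num : (0:ℝ) < 1/6)] with ε hε
    exact (key ε hε).1
  · filter_upwards [Ioo_mem_nhdsGT (by norm_num : (0:ℝ) < 1/6)] with ε hε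
    exact (key ε hε).2
end

section
/- Let μ be a Borel probability measure on ℝ^N, let (X_j)_{j≥1} be a sequence of independent ℝ^N-valued random variables each with law μ, and fix ε > 0. Then almost surely, the correlation sums C(E_n, ε) := (1/(n(n−1)))·Σ_{1≤i≠j≤n} 1[‖X_i − X_j‖ < ε] converge as n → ∞ to (μ ⊗ μ){(x,y) ∈ ℝ^N × ℝ^N : ‖x − y‖ < ε}, i.e., to the probability that ‖X_1 − X_2‖ < ε. -/
open MeasureTheory Filter Metric Topology ProbabilityTheory

private lemma tendsto_nat_sqrt_atTop' : Tendsto Nat.sqrt atTop atTop := by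
  refine tendsto_atTop.mpr fun b => eventually_atTop.2 ⟨b*b, fun n hn => Nat.le_sqrt.mpr hn⟩

private lemma tendsto_ratio' : Tendsto (fun k : ℕ =>
    ((k:ℝ)^2 * ((k:ℝ)^2 - 1)) / (((k:ℝ)+1)^2 * (((k:ℝ)+1)^2 - 1))) atTop (𝓝 1) := by
  have h1 : Tendsto (fun k : ℕ => 1/(k:ℝ)) atTop (𝓝 0) := tendsto_one_div_atTop_nhds_zero_nat
  have key : Tendsto (fun k : ℕ =>
      (1 - (1/(k:ℝ))^2) / ((1+1/(k:ℝ))^2 * ((1+1/(k:ℝ))^2 - (1/(k:ℝ))^2))) atTop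
      (𝓝 ((1 - 0^2)/((1+0)^2 * ((1+0)^2 - 0^2)))) :=
    Tendsto.div (tendsto_const_nhds.sub (h1.pow 2))
      (((tendsto_const_nhds.add h1).pow 2).mul
        (((tendsto_const_nhds.add h1).pow 2).sub (h1.pow 2))) (by norm_num)
  have lim : ((1 - 0^2)/((1+0)^2 * ((1+0)^2 - 0^2)) : ℝ) = 1 := by norm_num
  rw [lim] at key
  apply key.congr'
  filter_upwards [eventually_ge_atTop 1] with k hk
  have hk0 : (0:ℝ) < (k:ℝ) := by exact_mod_cast hk
  have hd1 : (0:ℝ) < (1+1/(k:ℝ))^2 * ((1+1/(k:ℝ))^2 - (1/(k:ℝ))^2) := by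
    have h2 : (0:ℝ) < 1/(k:ℝ) := one_div_pos.mpr hk0
    nlinarith
  have hd2 : (0:ℝ) < ((k:ℝ)+1)^2 * (((k:ℝ)+1)^2 - 1) := by
    have h3 : (0:ℝ) < ((k:ℝ)+1)^2 := by positivity
    have h4 : (1:ℝ) < ((k:ℝ)+1)^2 := by nlinarith
    exact mul_pos h3 (by linarith)
  rw [div_eq_div_iff hd1.ne' hd2.ne']
  field_simp

open Finset in
private lemma card_bad_le' (n : ℕ) :
    (((range n ×ˢ range n) ×ˢ (range n ×ˢ range n)).filter
      (fun q : (ℕ × ℕ) × ℕ × ℕ => q.1.1 = q.1.2 ∨ q.2.1 = q.2.2 ∨ q.1.1 = q.2.1 ∨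
        q.1.1 = q.2.2 ∨ q.1.2 = q.2.1 ∨ q.1.2 = q.2.2)).card ≤ 6 * n^3 := by
  classical
  set Q := (range n ×ˢ range n) ×ˢ (range n ×ˢ range n) with hQ
  have hcube : (range n ×ˢ range n ×ˢ range n).card = n^3 := by
    simp [Finset.card_product]; ring
  have hsplit : Q.filter (fun q : (ℕ × ℕ) × ℕ × ℕ => q.1.1 = q.1.2 ∨ q.2.1 = q.2.2 ∨
      q.1.1 = q.2.1 ∨ q.1.1 = q.2.2 ∨ q.1.2 = q.2.1 ∨ q.1.2 = q.2.2) ⊆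
      Q.filter (fun q => q.1.1 = q.1.2) ∪ Q.filter (fun q => q.2.1 = q.2.2) ∪
      Q.filter (fun q => q.1.1 = q.2.1) ∪ Q.filter (fun q => q.1.1 = q.2.2) ∪
      Q.filter (fun q => q.1.2 = q.2.1) ∪ Q.filter (fun q => q.1.2 = q.2.2) := by
    intro q hq
    simp only [Finset.mem_filter, Finset.mem_union] at hq ⊢
    tauto
  have h1 : (Q.filter (fun q : (ℕ × ℕ) × ℕ × ℕ => q.1.1 = q.1.2)).card ≤ n^3 := by
    rw [← hcube]
    apply Finset.card_le_card_of_injOn (fun q : (ℕ × ℕ) × ℕ × ℕ => (q.1.1, q.2.1, q.2.2))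
    · intro q hq
      have hq' := (Finset.mem_filter.mp hq).1
      simp only [hQ, Finset.mem_coe, Finset.mem_product, Finset.mem_range] at hq' ⊢
      tauto
    · intro a ha b hb h
      have ha' := (Finset.mem_filter.mp ha).2
      have hb' := (Finset.mem_filter.mp hb).2
      obtain ⟨⟨a1,a2⟩,a3,a4⟩ := a
      obtain ⟨⟨b1,b2⟩,b3,b4⟩ := b
      simp_all [Prod.ext_iff]
  have h2 : (Q.filter (fun q : (ℕ × ℕ) × ℕ × ℕ => q.2.1 = q.2.2)).card ≤ n^3 := by
    rw [← hcube]
    apply Finset.card_le_card_of_injOn (fun q : (ℕ × ℕ) × ℕ × ℕ => (q.1.1, q.1.2, q.2.1))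
    · intro q hq
      have hq' := (Finset.mem_filter.mp hq).1
      simp only [hQ, Finset.mem_coe, Finset.mem_product, Finset.mem_range] at hq' ⊢
      tauto
    · intro a ha b hb h
      have ha' := (Finset.mem_filter.mp ha).2
      have hb' := (Finset.mem_filter.mp hb).2
      obtain ⟨⟨a1,a2⟩,a3,a4⟩ := a
      obtain ⟨⟨b1,b2⟩,b3,b4⟩ := b
      simp_all [Prod.ext_iff]
  have h3 : (Q.filter (fun q : (ℕ × ℕ) × ℕ × ℕ => q.1.1 = q.2.1)).card ≤ n^3 := by
    rw [← hcube]
    apply Finset.card_le_card_of_injOn (fun q : (ℕ × ℕ) × ℕ × ℕ => (q.1.1, q.1.2, q.2.2))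
    · intro q hq
      have hq' := (Finset.mem_filter.mp hq).1
      simp only [hQ, Finset.mem_coe, Finset.mem_product, Finset.mem_range] at hq' ⊢
      tauto
    · intro a ha b hb h
      have ha' := (Finset.mem_filter.mp ha).2
      have hb' := (Finset.mem_filter.mp hb).2
      obtain ⟨⟨a1,a2⟩,a3,a4⟩ := a
      obtain ⟨⟨b1,b2⟩,b3,b4⟩ := b
      simp_all [Prod.ext_iff]
  have h4 : (Q.filter (fun q : (ℕ × ℕ) × ℕ × ℕ => q.1.1 = q.2.2)).card ≤ n^3 := by
    rw [← hcube]
    apply Finset.card_le_card_of_injOn (fun q : (ℕ × ℕ) × ℕ × ℕ => (q.1.1, q.1.2, q.2.1))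
    · intro q hq
      have hq' := (Finset.mem_filter.mp hq).1
      simp only [hQ, Finset.mem_coe, Finset.mem_product, Finset.mem_range] at hq' ⊢
      tauto
    · intro a ha b hb h
      have ha' := (Finset.mem_filter.mp ha).2
      have hb' := (Finset.mem_filter.mp hb).2
      obtain ⟨⟨a1,a2⟩,a3,a4⟩ := a
      obtain ⟨⟨b1,b2⟩,b3,b4⟩ := b
      simp_all [Prod.ext_iff]
  have h5 : (Q.filter (fun q : (ℕ × ℕ) × ℕ × ℕ => q.1.2 = q.2.1)).card ≤ n^3 := by
    rw [← hcube]
    apply Finset.card_le_card_of_injOn (fun q : (ℕ × ℕ) × ℕ × ℕ => (q.1.1, q.1.2, q.2.2))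
    · intro q hq
      have hq' := (Finset.mem_filter.mp hq).1
      simp only [hQ, Finset.mem_coe, Finset.mem_product, Finset.mem_range] at hq' ⊢
      tauto
    · intro a ha b hb h
      have ha' := (Finset.mem_filter.mp ha).2
      have hb' := (Finset.mem_filter.mp hb).2
      obtain ⟨⟨a1,a2⟩,a3,a4⟩ := a
      obtain ⟨⟨b1,b2⟩,b3,b4⟩ := b
      simp_all [Prod.ext_iff]
  have h6 : (Q.filter (fun q : (ℕ × ℕ) × ℕ × ℕ => q.1.2 = q.2.2)).card ≤ n^3 := by
    rw [← hcube]
    apply Finset.card_le_card_of_injOn (fun q : (ℕ × ℕ) × ℕ × ℕ => (q.1.1, q.1.2, q.2.1))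
    · intro q hq
      have hq' := (Finset.mem_filter.mp hq).1
      simp only [hQ, Finset.mem_coe, Finset.mem_product, Finset.mem_range] at hq' ⊢
      tauto
    · intro a ha b hb h
      have ha' := (Finset.mem_filter.mp ha).2
      have hb' := (Finset.mem_filter.mp hb).2
      obtain ⟨⟨a1,a2⟩,a3,a4⟩ := a
      obtain ⟨⟨b1,b2⟩,b3,b4⟩ := b
      simp_all [Prod.ext_iff]
  refine (Finset.card_le_card hsplit).trans ?_
  refine le_trans ?_ (by linarith :
    (Q.filter (fun q : (ℕ × ℕ) × ℕ × ℕ => q.1.1 = q.1.2)).card + (Q.filter (fun q : (ℕ × ℕ) × ℕ × ℕ => q.2.1 = q.2.2)).card +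
    (Q.filter (fun q : (ℕ × ℕ) × ℕ × ℕ => q.1.1 = q.2.1)).card + (Q.filter (fun q : (ℕ × ℕ) × ℕ × ℕ => q.1.1 = q.2.2)).card +
    (Q.filter (fun q : (ℕ × ℕ) × ℕ × ℕ => q.1.2 = q.2.1)).card + (Q.filter (fun q : (ℕ × ℕ) × ℕ × ℕ => q.1.2 = q.2.2)).card ≤ 6 * n^3)
  refine (Finset.card_union_le _ _).trans ?_
  refine Nat.add_le_add_right ?_ _
  refine (Finset.card_union_le _ _).trans ?_
  refine Nat.add_le_add_right ?_ _
  refine (Finset.card_union_le _ _).trans ?_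
  refine Nat.add_le_add_right ?_ _
  refine (Finset.card_union_le _ _).trans ?_
  refine Nat.add_le_add_right ?_ _
  exact Finset.card_union_le _ _

private lemma sq_squeeze' (S : ℕ → ℝ) (θ : ℝ) (hmono : Monotone S) (h0 : ∀ n, 0 ≤ S n)
    (h : Tendsto (fun k : ℕ => (1 / (((k^2 : ℕ) : ℝ) * (((k^2 : ℕ) : ℝ) - 1))) * S (k^2))
      atTop (𝓝 θ)) :
    Tendsto (fun n : ℕ => (1 / ((n : ℝ) * ((n : ℝ) - 1))) * S n) atTop (𝓝 θ) := by
  set C : ℕ → ℝ := fun m => (1 / ((m : ℝ) * ((m : ℝ) - 1))) * S m with hC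
  have hsq : Tendsto (fun k : ℕ => C (k^2)) atTop (𝓝 θ) := by
    apply h.congr
    intro k
    simp [hC]
  set a : ℕ → ℝ := fun k => S (k^2) / (((k:ℝ)+1)^2 * ((((k:ℝ)+1)^2) - 1)) with ha
  set b : ℕ → ℝ := fun k => S ((k+1)^2) / ((k:ℝ)^2 * (((k:ℝ)^2) - 1)) with hb
  have hA : Tendsto a atTop (𝓝 θ) := by
    have := hsq.mul tendsto_ratio'
    rw [mul_one] at this
    apply this.congr'
    filter_upwards [eventually_ge_atTop 2] with k hk
    have hk2 : (2:ℝ) ≤ (k:ℝ) := by exact_mod_cast hk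
    have h4 : (4:ℝ) ≤ (k:ℝ)^2 := by nlinarith
    have hpos : (0:ℝ) < (k:ℝ)^2 * ((k:ℝ)^2 - 1) :=
      mul_pos (by linarith) (by linarith)
    simp only [hC, ha]
    push_cast
    field_simp
    rw [mul_div_mul_left _ _ (ne_of_gt (by linarith))]
  have hB : Tendsto b atTop (𝓝 θ) := by
    have hsq1 : Tendsto (fun k : ℕ => C ((k+1)^2)) atTop (𝓝 θ) :=
      (tendsto_add_atTop_iff_nat 1).mpr hsq
    have hratio : Tendsto (fun k : ℕ =>
        (((k:ℝ)+1)^2 * (((k:ℝ)+1)^2 - 1)) / ((k:ℝ)^2 * ((k:ℝ)^2 - 1))) atTop (𝓝 1) := by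
      have := tendsto_ratio'.inv₀ one_ne_zero
      simp only [inv_div] at this
      simpa using this
    have := hsq1.mul hratio
    rw [mul_one] at this
    apply this.congr'
    filter_upwards [eventually_ge_atTop 2] with k hk
    have hk2 : (2:ℝ) ≤ (k:ℝ) := by exact_mod_cast hk
    have h4 : (4:ℝ) ≤ ((k:ℝ)+1)^2 := by nlinarith
    have hpos : (0:ℝ) < ((k:ℝ)+1)^2 * (((k:ℝ)+1)^2 - 1) :=
      mul_pos (by linarith) (by linarith)
    simp only [hC, hb]
    push_cast
    field_simp
    rw [mul_div_mul_left _ _ (ne_of_gt (by linarith))]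
  apply tendsto_of_tendsto_of_tendsto_of_le_of_le'
    (hA.comp tendsto_nat_sqrt_atTop') (hB.comp tendsto_nat_sqrt_atTop')
  · filter_upwards [eventually_ge_atTop 4] with n hn
    set k := n.sqrt with hk
    have hk2 : 2 ≤ k := by
      have h1 := Nat.sqrt_le_sqrt hn
      rw [show Nat.sqrt 4 = 2 from by rw [show (4:ℕ) = 2^2 from rfl, Nat.sqrt_eq']] at h1
      exact h1
    have hle : k^2 ≤ n := Nat.sqrt_le' n
    have hlt : n < (k+1)^2 := by
      simpa [Nat.succ_eq_add_one] using Nat.lt_succ_sqrt' n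
    have hnR : (4:ℝ) ≤ (n:ℝ) := by exact_mod_cast hn
    have hkR : (2:ℝ) ≤ (k:ℝ) := by exact_mod_cast hk2
    have hnk : ((n:ℝ)) ≤ ((k:ℝ)+1)^2 - 1 := by
      have : (n:ℝ) + 1 ≤ (((k+1)^2 : ℕ) : ℝ) := by exact_mod_cast hlt
      push_cast at this; linarith
    have hkn : ((k:ℝ))^2 ≤ (n:ℝ) := by exact_mod_cast hle
    have hnpos : (0:ℝ) < (n:ℝ) * ((n:ℝ) - 1) := by nlinarith
    show a k ≤ (1 / ((n : ℝ) * ((n : ℝ) - 1))) * S n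
    rw [one_div_mul_eq_div]
    simp only [ha]
    apply div_le_div₀ (h0 _) (hmono hle) hnpos
    nlinarith
  · filter_upwards [eventually_ge_atTop 4] with n hn
    set k := n.sqrt with hk
    have hk2 : 2 ≤ k := by
      have h1 := Nat.sqrt_le_sqrt hn
      rw [show Nat.sqrt 4 = 2 from by rw [show (4:ℕ) = 2^2 from rfl, Nat.sqrt_eq']] at h1
      exact h1
    have hle : k^2 ≤ n := Nat.sqrt_le' n
    have hlt : n < (k+1)^2 := by
      simpa [Nat.succ_eq_add_one] using Nat.lt_succ_sqrt' n
    have hnR : (4:ℝ) ≤ (n:ℝ) := by exact_mod_cast hn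
    have hkR : (2:ℝ) ≤ (k:ℝ) := by exact_mod_cast hk2
    have hkn : ((k:ℝ))^2 ≤ (n:ℝ) := by exact_mod_cast hle
    have h4 : (4:ℝ) ≤ (k:ℝ)^2 := by nlinarith
    show (1 / ((n : ℝ) * ((n : ℝ) - 1))) * S n ≤ b k
    rw [one_div_mul_eq_div]
    simp only [hb]
    apply div_le_div₀ (h0 _) (hmono hlt.le) (mul_pos (by linarith) (by linarith))
    nlinarith

/-- Strong law for correlation sums: if `(X_j)` is an i.i.d. sequence with law `μ` on `ℝ^N`
and `ε > 0`, then almost surely the correlation sums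
`C(E_n, ε) = (1/(n(n-1))) ∑_{i ≠ j < n} 1[‖X_i - X_j‖ < ε]`
converge to `(μ ⊗ μ){(x,y) : ‖x - y‖ < ε}`. -/
theorem correlationSum_tendsto_correlationIntegral
    {N : ℕ} {Ω : Type*} [MeasurableSpace Ω] (P : Measure Ω) [IsProbabilityMeasure P]
    (μ : Measure (EuclideanSpace ℝ (Fin N))) [IsProbabilityMeasure μ]
    (X : ℕ → Ω → EuclideanSpace ℝ (Fin N))
    (hmeas : ∀ j, Measurable (X j))
    (hindep : iIndepFun X P)
    (hlaw : ∀ j, P.map (X j) = μ)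
    (ε : ℝ) (hε : 0 < ε) :
    ∀ᵐ ω ∂P, Tendsto
      (fun n : ℕ => (1 / ((n : ℝ) * ((n : ℝ) - 1))) *
        ∑ i ∈ Finset.range n, ∑ j ∈ Finset.range n,
          if i ≠ j ∧ dist (X i ω) (X j ω) < ε then (1 : ℝ) else 0)
      atTop
      (𝓝 ((μ.prod μ) {q : EuclideanSpace ℝ (Fin N) × EuclideanSpace ℝ (Fin N) |
        dist q.1 q.2 < ε}).toReal) := by
  classical
  set A : Set (EuclideanSpace ℝ (Fin N) × EuclideanSpace ℝ (Fin N)) :=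
    {q | dist q.1 q.2 < ε} with hA
  have hAm : MeasurableSet A :=
    (isOpen_lt (continuous_fst.dist continuous_snd) continuous_const).measurableSet
  set θ := ((μ.prod μ) A).toReal with hθ
  have hθ0 : 0 ≤ θ := ENNReal.toReal_nonneg
  have hθ1 : θ ≤ 1 := by
    have h := prob_le_one (μ := μ.prod μ) (s := A)
    simpa [hθ] using ENNReal.toReal_mono ENNReal.one_ne_top h
  set g : EuclideanSpace ℝ (Fin N) × EuclideanSpace ℝ (Fin N) → ℝ :=
    A.indicator (fun _ => 1) with hg
  have hgm : Measurable g := measurable_const.indicator hAm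
  have hgint : ∫ z, g z ∂(μ.prod μ) = θ := by
    rw [hg, integral_indicator_const (1 : ℝ) hAm]
    simp [hθ, Measure.real]
  set T : ℕ → ℕ → Ω → ℝ :=
    fun i j ω => if i ≠ j ∧ dist (X i ω) (X j ω) < ε then 1 else 0 with hT
  have hTg : ∀ i j, i ≠ j → T i j = fun ω => g (X i ω, X j ω) := by
    intro i j hij
    funext ω
    by_cases h : dist (X i ω) (X j ω) < ε <;>
      simp [hT, hg, Set.indicator, hA, h, hij]
  have hTzero : ∀ i, T i i = fun _ => (0:ℝ) := by
    intro i; funext ω; simp [hT]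
  have hTmeas : ∀ i j, Measurable (T i j) := by
    intro i j
    rcases eq_or_ne i j with rfl | hij
    · rw [hTzero]; exact measurable_const
    · rw [hTg i j hij]; exact hgm.comp ((hmeas i).prodMk (hmeas j))
  have hT0 : ∀ i j ω, 0 ≤ T i j ω := by
    intro i j ω; simp only [hT]; split <;> norm_num
  have hT1 : ∀ i j ω, T i j ω ≤ 1 := by
    intro i j ω; simp only [hT]; split <;> norm_num
  have hTint : ∀ i j, Integrable (T i j) P := by
    intro i j
    refine Integrable.mono' (integrable_const 1) (hTmeas i j).aestronglyMeasurable ?_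
    filter_upwards with ω
    rw [Real.norm_eq_abs, abs_le]
    exact ⟨by linarith [hT0 i j ω], hT1 i j ω⟩
  have hpair : ∀ i j, i ≠ j →
      Measure.map (fun ω => (X i ω, X j ω)) P = μ.prod μ := by
    intro i j hij
    have h := hindep.indepFun hij
    rw [indepFun_iff_map_prod_eq_prod_map_map (hmeas i).aemeasurable
      (hmeas j).aemeasurable] at h
    rw [h, hlaw i, hlaw j]
  have hTavg : ∀ i j, i ≠ j → ∫ ω, T i j ω ∂P = θ := by
    intro i j hij
    rw [hTg i j hij]
    have : ∫ ω, g (X i ω, X j ω) ∂P = ∫ z, g z ∂(μ.prod μ) := by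
      rw [← hpair i j hij,
        integral_map ((hmeas i).prodMk (hmeas j)).aemeasurable
          hgm.aestronglyMeasurable]
    rw [this, hgint]
  have hTTint : ∀ i j k l, Integrable (fun ω => T i j ω * T k l ω) P := by
    intro i j k l
    refine Integrable.mono' (integrable_const 1)
      ((hTmeas i j).mul (hTmeas k l)).aestronglyMeasurable ?_
    filter_upwards with ω
    rw [Real.norm_eq_abs, abs_mul, abs_of_nonneg (hT0 i j ω), abs_of_nonneg (hT0 k l ω)]
    exact mul_le_one₀ (hT1 i j ω) (hT0 k l ω) (hT1 k l ω)
  have hTT : ∀ i j k l : ℕ, i ≠ j → k ≠ l → i ≠ k → i ≠ l → j ≠ k → j ≠ l →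
      ∫ ω, T i j ω * T k l ω ∂P = θ * θ := by
    intro i j k l hij hkl hik hil hjk hjl
    have hind := hindep.indepFun_prodMk_prodMk hmeas i j k l hik hil hjk hjl
    have hYZ : IndepFun (fun ω => g (X i ω, X j ω)) (fun ω => g (X k ω, X l ω)) P :=
      hind.comp hgm hgm
    rw [hTg i j hij, hTg k l hkl]
    have := hYZ.integral_fun_mul_eq_mul_integral
      (by rw [← hTg i j hij]; exact (hTint i j).aestronglyMeasurable)
      (by rw [← hTg k l hkl]; exact (hTint k l).aestronglyMeasurable)
    calc ∫ ω, g (X i ω, X j ω) * g (X k ω, X l ω) ∂P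
        = (∫ ω, g (X i ω, X j ω) ∂P) * ∫ ω, g (X k ω, X l ω) ∂P := this
      _ = θ * θ := by
          rw [← hTg i j hij, ← hTg k l hkl, hTavg i j hij, hTavg k l hkl]
  -- centered variables
  set U : ℕ × ℕ → Ω → ℝ :=
    fun p ω => T p.1 p.2 ω - (if p.1 = p.2 then 0 else θ) with hU
  have hUint : ∀ p, Integrable (U p) P := fun p =>
    (hTint p.1 p.2).sub (integrable_const _)
  have hUbd : ∀ p ω, |U p ω| ≤ 1 := by
    intro p ω
    have h0 := hT0 p.1 p.2 ω
    have h1 := hT1 p.1 p.2 ω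
    simp only [hU]
    rw [abs_le]
    split_ifs <;> constructor <;> linarith
  have hUUint : ∀ p q, Integrable (fun ω => U p ω * U q ω) P := by
    intro p q
    refine Integrable.mono' (integrable_const 1)
      ((((hTmeas p.1 p.2).sub measurable_const).mul
        ((hTmeas q.1 q.2).sub measurable_const)).aestronglyMeasurable) ?_
    filter_upwards with ω
    rw [Real.norm_eq_abs, abs_mul]
    exact mul_le_one₀ (hUbd p ω) (abs_nonneg _) (hUbd q ω)
  have hUU_bd : ∀ p q : ℕ × ℕ, ∫ ω, U p ω * U q ω ∂P ≤ 1 := by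
    intro p q
    have h := norm_integral_le_of_norm_le_const
      (C := 1) (μ := P) (f := fun ω => U p ω * U q ω) ?_
    · rw [Real.norm_eq_abs] at h
      simp only [probReal_univ, mul_one] at h
      exact (le_abs_self _).trans h
    · filter_upwards with ω
      rw [Real.norm_eq_abs, abs_mul]
      exact mul_le_one₀ (hUbd p ω) (abs_nonneg _) (hUbd q ω)
  have hUU_zero : ∀ p q : ℕ × ℕ,
      ¬(p.1 = p.2 ∨ q.1 = q.2 ∨ p.1 = q.1 ∨ p.1 = q.2 ∨ p.2 = q.1 ∨ p.2 = q.2) →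
      ∫ ω, U p ω * U q ω ∂P = 0 := by
    intro p q hgood
    push_neg at hgood
    obtain ⟨h1, h2, h3, h4, h5, h6⟩ := hgood
    have hexp : ∀ ω, U p ω * U q ω =
        T p.1 p.2 ω * T q.1 q.2 ω - θ * T p.1 p.2 ω - θ * T q.1 q.2 ω + θ * θ := by
      intro ω
      simp only [hU, if_neg h1, if_neg h2]
      ring
    rw [integral_congr_ae (Filter.Eventually.of_forall hexp)]
    have i1 : Integrable (fun ω => T p.1 p.2 ω * T q.1 q.2 ω - θ * T p.1 p.2 ω) P :=
      (hTTint _ _ _ _).sub ((hTint p.1 p.2).const_mul θ)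
    have i2 : Integrable
        (fun ω => T p.1 p.2 ω * T q.1 q.2 ω - θ * T p.1 p.2 ω - θ * T q.1 q.2 ω) P :=
      i1.sub ((hTint q.1 q.2).const_mul θ)
    rw [integral_add i2 (integrable_const (θ * θ)),
      integral_sub i1 ((hTint q.1 q.2).const_mul θ),
      integral_sub (hTTint _ _ _ _) ((hTint p.1 p.2).const_mul θ),
      integral_const_mul, integral_const_mul, integral_const,
      hTT p.1 p.2 q.1 q.2 h1 h2 h3 h4 h5 h6, hTavg p.1 p.2 h1, hTavg q.1 q.2 h2]
    simp
  -- the correlation sums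
  set S : ℕ → Ω → ℝ := fun n ω => ∑ i ∈ Finset.range n, ∑ j ∈ Finset.range n,
    if i ≠ j ∧ dist (X i ω) (X j ω) < ε then (1:ℝ) else 0 with hS
  have hST : ∀ n ω, S n ω = ∑ p ∈ Finset.range n ×ˢ Finset.range n, T p.1 p.2 ω := by
    intro n ω
    rw [hS, Finset.sum_product]
  set m : ℕ → ℝ := fun n =>
    ∑ p ∈ Finset.range n ×ˢ Finset.range n, (if p.1 = p.2 then (0:ℝ) else θ) with hm
  have hmval : ∀ n, m n = (n:ℝ) * ((n:ℝ) - 1) * θ := by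
    intro n
    simp only [hm]
    rw [Finset.sum_product]
    have hinner : ∀ i ∈ Finset.range n,
        (∑ j ∈ Finset.range n, if i = j then (0:ℝ) else θ) = (n:ℝ) * θ - θ := by
      intro i hi
      have : (∑ j ∈ Finset.range n, if i = j then (0:ℝ) else θ)
          = ∑ j ∈ Finset.range n, (θ - if i = j then θ else 0) := by
        apply Finset.sum_congr rfl
        intro j _
        split_ifs <;> ring
      rw [this, Finset.sum_sub_distrib, Finset.sum_const, Finset.sum_ite_eq,
        if_pos hi, Finset.card_range, nsmul_eq_mul]
    rw [Finset.sum_congr rfl hinner, Finset.sum_const, Finset.card_range, nsmul_eq_mul]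
    ring
  have hSU : ∀ n ω, S n ω - m n = ∑ p ∈ Finset.range n ×ˢ Finset.range n, U p ω := by
    intro n ω
    rw [hST, hm, ← Finset.sum_sub_distrib]
  -- variance bound
  have hVar : ∀ n : ℕ, ∫ ω, (S n ω - m n)^2 ∂P ≤ 6 * (n:ℝ)^3 := by
    intro n
    have hexpand : ∀ ω, (S n ω - m n)^2 =
        ∑ pq ∈ ((Finset.range n ×ˢ Finset.range n) ×ˢ (Finset.range n ×ˢ Finset.range n)),
          U pq.1 ω * U pq.2 ω := by
      intro ω
      rw [hSU, pow_two, Finset.sum_mul_sum, ← Finset.sum_product']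
    rw [integral_congr_ae (Filter.Eventually.of_forall hexpand), integral_finset_sum _
      (fun pq _ => hUUint pq.1 pq.2)]
    set Q2 := (Finset.range n ×ˢ Finset.range n) ×ˢ (Finset.range n ×ˢ Finset.range n)
      with hQ2
    have hbound : ∀ pq ∈ Q2, (∫ ω, U pq.1 ω * U pq.2 ω ∂P) ≤
        (if pq.1.1 = pq.1.2 ∨ pq.2.1 = pq.2.2 ∨ pq.1.1 = pq.2.1 ∨
          pq.1.1 = pq.2.2 ∨ pq.1.2 = pq.2.1 ∨ pq.1.2 = pq.2.2 then (1:ℝ) else 0) := by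
      intro pq _
      split_ifs with hb
      · exact hUU_bd pq.1 pq.2
      · exact le_of_eq (hUU_zero pq.1 pq.2 hb)
    refine (Finset.sum_le_sum hbound).trans ?_
    rw [Finset.sum_boole]
    have hcard := card_bad_le' n
    calc ((Q2.filter _).card : ℝ) ≤ ((6 * n^3 : ℕ) : ℝ) := by exact_mod_cast hcard
      _ = 6 * (n:ℝ)^3 := by push_cast; ring
  have hsqint : ∀ n : ℕ, Integrable (fun ω => (S n ω - m n)^2) P := by
    intro n
    have heq : (fun ω => (S n ω - m n)^2) = fun ω =>
        ∑ pq ∈ ((Finset.range n ×ˢ Finset.range n) ×ˢ (Finset.range n ×ˢ Finset.range n)),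
          U pq.1 ω * U pq.2 ω := by
      funext ω
      rw [hSU, pow_two, Finset.sum_mul_sum, ← Finset.sum_product']
    rw [heq]
    exact integrable_finset_sum _ (fun pq _ => hUUint pq.1 pq.2)
  -- Chebyshev + Borel–Cantelli along the subsequence (k+2)^2
  have main2 : ∀ δ : ℝ, 0 < δ → ∀ᵐ ω ∂P, ∀ᶠ k : ℕ in atTop,
      |(1 / ((((k+2)^2 : ℕ) : ℝ) * ((((k+2)^2 : ℕ) : ℝ) - 1))) * S ((k+2)^2) ω - θ| < δ := by
    intro δ hδ
    set s : ℕ → Set Ω := fun k => {ω |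
      δ ≤ |(1 / ((((k+2)^2 : ℕ) : ℝ) * ((((k+2)^2 : ℕ) : ℝ) - 1))) * S ((k+2)^2) ω - θ|}
      with hs
    have hPbound : ∀ k : ℕ, P (s k) ≤ ENNReal.ofReal ((24/δ^2) * (1/((k:ℝ)+2)^2)) := by
      intro k
      set n : ℕ := (k+2)^2 with hn
      set K : ℝ := (k:ℝ) + 2 with hK
      have hK2 : (2:ℝ) ≤ K := by
        rw [hK]
        have := Nat.cast_nonneg (α := ℝ) k
        linarith
      have hnK : ((n:ℕ) : ℝ) = K^2 := by rw [hn, hK]; push_cast; ring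
      set t : ℝ := K^2 with ht
      have ht4 : (4:ℝ) ≤ t := by rw [ht]; nlinarith
      have hD : (0:ℝ) < (n:ℝ) * ((n:ℝ) - 1) := by rw [hnK]; nlinarith
      set D : ℝ := (n:ℝ) * ((n:ℝ) - 1) with hDdef
      have hsub : s k ⊆ {ω | (δ * D)^2 ≤ (S n ω - m n)^2} := by
        intro ω hω
        simp only [hs, Set.mem_setOf_eq] at hω ⊢
        have hrepr : (1 / ((n:ℝ) * ((n:ℝ) - 1))) * S n ω - θ = (S n ω - m n) / D := by
          rw [hmval n]
          field_simp
          rw [hDdef, sub_mul, div_mul_cancel₀ _ hD.ne']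
          ring
        rw [hrepr, abs_div, abs_of_pos hD] at hω
        have h2 : δ * D ≤ |S n ω - m n| := by
          rw [← le_div_iff₀ hD] at *
          exact hω
        calc (δ * D)^2 ≤ |S n ω - m n|^2 := by
              apply pow_le_pow_left₀ (by positivity) h2
          _ = (S n ω - m n)^2 := sq_abs _
      have markov := mul_meas_ge_le_integral_of_nonneg
        (Filter.Eventually.of_forall (fun ω => sq_nonneg (S n ω - m n))) (hsqint n)
        ((δ * D)^2)
      have hmono' := ENNReal.toReal_mono (measure_ne_top P _) (measure_mono hsub)
      have hpos : (0:ℝ) < (δ * D)^2 := by positivity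
      have h3 : (P (s k)).toReal ≤ 6 * (n:ℝ)^3 / ((δ * D)^2) := by
        rw [le_div_iff₀ hpos]
        calc (P (s k)).toReal * (δ * D)^2
            ≤ (P {ω | (δ * D)^2 ≤ (S n ω - m n)^2}).toReal * (δ * D)^2 := by
              apply mul_le_mul_of_nonneg_right hmono' (le_of_lt hpos)
          _ ≤ ∫ ω, (S n ω - m n)^2 ∂P := by rw [mul_comm]; exact markov
          _ ≤ 6 * (n:ℝ)^3 := hVar n
      have h4 : 6 * (n:ℝ)^3 / ((δ * D)^2) ≤ (24/δ^2) * (1/K^2) := by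
        have hDt : D = t * (t - 1) := by rw [hDdef, hnK, ht]
        have hδ' : δ ≠ 0 := ne_of_gt hδ
        have hK0 : K ≠ 0 := by intro h; rw [h] at hK2; linarith
        have hrhs : (24/δ^2) * (1/K^2) = 24 / (δ^2 * t) := by
          rw [ht]; field_simp
        have core : 6 * t^4 ≤ 24 * (t * (t-1))^2 := by
          nlinarith [pow_nonneg (by linarith : (0:ℝ) ≤ t) 3,
            mul_nonneg (pow_nonneg (by linarith : (0:ℝ) ≤ t) 3)
              (by linarith : (0:ℝ) ≤ t - 4), sq_nonneg t]
        rw [hrhs, hnK, hDt]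
        rw [div_le_div_iff₀ (by rw [← hDt]; positivity)
          (mul_pos (pow_pos hδ 2) (by linarith : (0:ℝ) < t))]
        calc 6 * t^3 * (δ^2 * t) = δ^2 * (6 * t^4) := by ring
          _ ≤ δ^2 * (24 * (t * (t-1))^2) :=
              mul_le_mul_of_nonneg_left core (sq_nonneg δ)
          _ = 24 * (δ * (t * (t - 1)))^2 := by ring
      calc P (s k) = ENNReal.ofReal ((P (s k)).toReal) :=
            (ENNReal.ofReal_toReal (measure_ne_top P _)).symm
        _ ≤ ENNReal.ofReal ((24/δ^2) * (1/((k:ℝ)+2)^2)) := by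
            apply ENNReal.ofReal_le_ofReal
            rw [← hK]
            exact h3.trans h4
    have hsummable : Summable (fun k : ℕ => (24/δ^2) * (1/((k:ℝ)+2)^2)) := by
      apply Summable.mul_left
      have h0 : Summable (fun n : ℕ => 1/(n:ℝ)^2) :=
        Real.summable_one_div_nat_pow.mpr one_lt_two
      have h1 := (summable_nat_add_iff 2).mpr h0
      apply h1.congr
      intro n
      push_cast
      ring
    have hsum : (∑' k, P (s k)) ≠ ⊤ := by
      have h1 : ∑' k : ℕ, P (s k) ≤ ∑' k : ℕ, ENNReal.ofReal ((24/δ^2) * (1/((k:ℝ)+2)^2)) :=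
        ENNReal.tsum_le_tsum hPbound
      have h2 : ∑' k : ℕ, ENNReal.ofReal ((24/δ^2) * (1/((k:ℝ)+2)^2))
          = ENNReal.ofReal (∑' k : ℕ, (24/δ^2) * (1/((k:ℝ)+2)^2)) :=
        (ENNReal.ofReal_tsum_of_nonneg (fun k => by positivity) hsummable).symm
      exact ne_top_of_le_ne_top (by rw [h2]; exact ENNReal.ofReal_ne_top) h1
    filter_upwards [ae_eventually_notMem hsum] with ω hω
    filter_upwards [hω] with k hk
    rw [hs] at hk
    simp only [Set.mem_setOf_eq, not_le] at hk
    exact hk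
  have main3 : ∀ᵐ ω ∂P, ∀ m' : ℕ, ∀ᶠ k : ℕ in atTop,
      |(1 / ((((k+2)^2 : ℕ) : ℝ) * ((((k+2)^2 : ℕ) : ℝ) - 1))) * S ((k+2)^2) ω - θ|
        < 1/((m':ℝ)+1) :=
    ae_all_iff.mpr fun m' => main2 (1/((m':ℝ)+1)) (by positivity)
  filter_upwards [main3] with ω hω
  have hsubseq : Tendsto
      (fun k : ℕ => (1 / ((((k+2)^2 : ℕ) : ℝ) * ((((k+2)^2 : ℕ) : ℝ) - 1))) * S ((k+2)^2) ω)
      atTop (𝓝 θ) := by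
    rw [Metric.tendsto_atTop]
    intro δ hδ
    obtain ⟨m', hm'⟩ := exists_nat_one_div_lt hδ
    obtain ⟨K0, hK0⟩ := eventually_atTop.mp (hω m')
    exact ⟨K0, fun k hk => by rw [Real.dist_eq]; exact lt_trans (hK0 k hk) hm'⟩
  have hshift : Tendsto
      (fun k : ℕ => (1 / (((k^2 : ℕ) : ℝ) * (((k^2 : ℕ) : ℝ) - 1))) * S (k^2) ω)
      atTop (𝓝 θ) := (tendsto_add_atTop_iff_nat 2).mp hsubseq
  have hmono : Monotone (fun n => S n ω) := by
    intro n n' hnn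
    show S n ω ≤ S n' ω
    rw [hST, hST]
    apply Finset.sum_le_sum_of_subset_of_nonneg
    · exact Finset.product_subset_product (Finset.range_subset_range.mpr hnn)
        (Finset.range_subset_range.mpr hnn)
    · exact fun p _ _ => hT0 p.1 p.2 ω
  have hnonneg : ∀ n, 0 ≤ S n ω := by
    intro n
    show (0:ℝ) ≤ S n ω
    rw [hST]
    exact Finset.sum_nonneg fun p _ => hT0 p.1 p.2 ω
  exact sq_squeeze' (fun n => S n ω) θ hmono hnonneg hshift
end

section
/- Let μ₁ and μ₂ be Borel probability measures on ℝ^N whose supports are at Euclidean distance greater than s for some s > 0, let θ ∈ [0,1], and let μ = θ·μ₁ + (1−θ)·μ₂. Then for every ε with 0 < ε ≤ s, C(μ,ε) = θ²·C(μ₁,ε) + (1−θ)²·C(μ₂,ε). -/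
open MeasureTheory Filter Metric Topology ENNReal

/-- The support of a measure on a metric space: points all of whose balls have positive mass. -/
def measSupport {X : Type*} [MetricSpace X] [MeasurableSpace X] (μ : Measure X) : Set X :=
  {x | ∀ ε : ℝ, 0 < ε → 0 < μ (Metric.ball x ε)}

/-- The correlation integral `C(μ,ε) = (μ ⊗ μ){(x,y) : ‖x - y‖ < ε}`. -/
noncomputable def corrIntegral {N : ℕ} (μ : Measure (EuclideanSpace ℝ (Fin N))) (ε : ℝ) :
    ℝ≥0∞ :=
  (μ.prod μ) {q : EuclideanSpace ℝ (Fin N) × EuclideanSpace ℝ (Fin N) | dist q.1 q.2 < ε}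

lemma measure_compl_measSupport {X : Type*} [MetricSpace X] [MeasurableSpace X]
    [SecondCountableTopology X] (μ : Measure X) : μ (measSupport μ)ᶜ = 0 := by
  apply measure_null_of_locally_null
  intro x hx
  simp only [measSupport, Set.mem_compl_iff, Set.mem_setOf_eq, not_forall] at hx
  obtain ⟨r, hr, hball⟩ := hx
  refine ⟨Metric.ball x r, mem_nhdsWithin_of_mem_nhds (Metric.ball_mem_nhds x hr), ?_⟩
  simpa using hball

/-- Cross term vanishes. -/
lemma cross_term_zero {N : ℕ}
    (μ₁ μ₂ : Measure (EuclideanSpace ℝ (Fin N))) [SFinite μ₂]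
    (s : ℝ)
    (hsep : ∀ x ∈ measSupport μ₁, ∀ y ∈ measSupport μ₂, s < dist x y)
    (ε : ℝ) (hεs : ε ≤ s) :
    (μ₁.prod μ₂) {q : EuclideanSpace ℝ (Fin N) × EuclideanSpace ℝ (Fin N) | dist q.1 q.2 < ε}
      = 0 := by
  have hsub : {q : EuclideanSpace ℝ (Fin N) × EuclideanSpace ℝ (Fin N) | dist q.1 q.2 < ε}
      ⊆ (measSupport μ₁)ᶜ ×ˢ Set.univ ∪ Set.univ ×ˢ (measSupport μ₂)ᶜ := by
    intro q hq
    simp only [Set.mem_setOf_eq] at hq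
    by_contra hc
    simp only [Set.mem_union, Set.mem_prod, Set.mem_univ, Set.mem_compl_iff, not_or, not_and,
      and_true, true_and, not_not] at hc
    exact absurd (hsep q.1 hc.1 q.2 hc.2) (by linarith)
  refine measure_mono_null hsub (measure_union_null ?_ ?_)
  · rw [Measure.prod_prod, measure_compl_measSupport, zero_mul]
  · rw [Measure.prod_prod, measure_compl_measSupport, mul_zero]

lemma prod_smul_apply {α β : Type*} [MeasurableSpace α] [MeasurableSpace β]
    (μ : Measure α) (ν : Measure β) [SFinite ν] (a b : ℝ≥0∞) (hb : b ≠ ∞)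
    {D : Set (α × β)} (hD : MeasurableSet D) :
    ((a • μ).prod (b • ν)) D = a * b * (μ.prod ν) D := by
  rw [Measure.prod_apply hD, Measure.prod_apply hD, lintegral_smul_measure]
  simp only [Measure.smul_apply, smul_eq_mul]
  rw [lintegral_const_mul' _ _ hb]
  ring

/-- If the supports of `μ₁` and `μ₂` are at distance greater than `s > 0`, then for
`0 < ε ≤ s` the correlation integral of the mixture `θ·μ₁ + (1-θ)·μ₂` is
`θ²·C(μ₁,ε) + (1-θ)²·C(μ₂,ε)`. -/
theorem corrIntegral_mixture {N : ℕ}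
    (μ₁ μ₂ : Measure (EuclideanSpace ℝ (Fin N)))
    [IsProbabilityMeasure μ₁] [IsProbabilityMeasure μ₂]
    (s : ℝ) (hs : 0 < s)
    (hsep : ∀ x ∈ measSupport μ₁, ∀ y ∈ measSupport μ₂, s < dist x y)
    (θ : ℝ) (hθ : θ ∈ Set.Icc (0:ℝ) 1)
    (ε : ℝ) (hε : 0 < ε) (hεs : ε ≤ s) :
    corrIntegral (ENNReal.ofReal θ • μ₁ + ENNReal.ofReal (1 - θ) • μ₂) ε
      = ENNReal.ofReal (θ ^ 2) * corrIntegral μ₁ ε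
        + ENNReal.ofReal ((1 - θ) ^ 2) * corrIntegral μ₂ ε := by
  obtain ⟨hθ0, hθ1⟩ := hθ
  set a := ENNReal.ofReal θ with ha
  set b := ENNReal.ofReal (1 - θ) with hb
  have haf : a ≠ ∞ := ENNReal.ofReal_ne_top
  have hbf : b ≠ ∞ := ENNReal.ofReal_ne_top
  have hsep' : ∀ x ∈ measSupport μ₂, ∀ y ∈ measSupport μ₁, s < dist x y := by
    intro x hx y hy; rw [dist_comm]; exact hsep y hy x hx
  have hD : MeasurableSet {q : EuclideanSpace ℝ (Fin N) × EuclideanSpace ℝ (Fin N) |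
      dist q.1 q.2 < ε} := by
    apply measurableSet_lt
    · exact (continuous_dist.comp (continuous_fst.prodMk continuous_snd)).measurable
    · exact measurable_const
  unfold corrIntegral
  have : IsFiniteMeasure (a • μ₁) := μ₁.smul_finite haf
  have : IsFiniteMeasure (b • μ₂) := μ₂.smul_finite hbf
  rw [Measure.prod_add, Measure.add_prod, Measure.add_prod]
  simp only [Measure.add_apply]
  rw [prod_smul_apply μ₁ μ₁ a a haf hD, prod_smul_apply μ₂ μ₁ b a haf hD,
    prod_smul_apply μ₁ μ₂ a b hbf hD, prod_smul_apply μ₂ μ₂ b b hbf hD]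
  rw [cross_term_zero μ₁ μ₂ s hsep ε hεs, cross_term_zero μ₂ μ₁ s hsep' ε hεs]
  have h1 : a * a = ENNReal.ofReal (θ ^ 2) := by
    rw [ha, ← ENNReal.ofReal_mul hθ0, sq]
  have h2 : b * b = ENNReal.ofReal ((1 - θ) ^ 2) := by
    rw [hb, ← ENNReal.ofReal_mul (by linarith : (0:ℝ) ≤ 1 - θ), sq]
  rw [← h1, ← h2]
  ring
end

section
/- Let μ be a Borel probability measure on ℝ^N and suppose there exist constants c, C > 0, d ≥ 0, and ε₀ > 0 such that c·ε^d ≤ μ(B(x,ε)) ≤ C·ε^d for every x in the support of μ and every 0 < ε < ε₀. Then the correlation dimension D_C(μ) = lim_{ε→0⁺} log C(μ,ε)/log ε exists and equals d. -/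
open MeasureTheory Filter Metric Topology ENNReal

/-- If `c·ε^d ≤ μ(B(x,ε)) ≤ C·ε^d` for all `x` in the support of `μ` and all small `ε`, then the
correlation dimension `lim_{ε→0⁺} log C(μ,ε) / log ε` exists and equals `d`. -/
theorem correlationDim_of_uniform_scaling {N : ℕ}
    (μ : Measure (EuclideanSpace ℝ (Fin N))) [IsProbabilityMeasure μ]
    (c C d ε₀ : ℝ) (hc : 0 < c) (hC : 0 < C) (hd : 0 ≤ d) (hε₀ : 0 < ε₀)
    (hball : ∀ x ∈ measSupport μ, ∀ ε : ℝ, 0 < ε → ε < ε₀ →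
      ENNReal.ofReal (c * ε ^ d) ≤ μ (Metric.ball x ε) ∧
      μ (Metric.ball x ε) ≤ ENNReal.ofReal (C * ε ^ d)) :
    Tendsto (fun ε : ℝ => Real.log (corrIntegral μ ε).toReal / Real.log ε)
      (𝓝[>] 0) (𝓝 d) := by
  set S := measSupport μ with hS
  -- the complement of the support is open
  have hSopen : IsOpen Sᶜ := by
    rw [Metric.isOpen_iff]
    intro x hx
    simp only [hS, measSupport, Set.mem_compl_iff, Set.mem_setOf_eq, not_forall, not_lt] at hx
    obtain ⟨ε, hε, hμ⟩ := hx
    have hμ0 : μ (Metric.ball x ε) = 0 := le_antisymm hμ zero_le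
    refine ⟨ε / 2, by positivity, fun y hy => ?_⟩
    simp only [hS, measSupport, Set.mem_compl_iff, Set.mem_setOf_eq, not_forall, not_lt]
    refine ⟨ε / 2, by positivity, ?_⟩
    have hsub : Metric.ball y (ε / 2) ⊆ Metric.ball x ε := by
      intro z hz
      rw [Metric.mem_ball] at *
      calc dist z x ≤ dist z y + dist y x := dist_triangle _ _ _
        _ < ε / 2 + ε / 2 := by exact add_lt_add hz hy
        _ = ε := by ring
    exact le_of_eq (measure_mono_null hsub hμ0)
  have hSmeas : MeasurableSet S := by
    simpa using hSopen.measurableSet.compl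
  -- the complement of the support is null
  have hSc_null : μ Sᶜ = 0 := by
    apply measure_null_of_locally_null
    intro x hx
    simp only [hS, measSupport, Set.mem_compl_iff, Set.mem_setOf_eq, not_forall, not_lt] at hx
    obtain ⟨ε, hε, hμ⟩ := hx
    exact ⟨Metric.ball x ε, mem_nhdsWithin_of_mem_nhds (Metric.ball_mem_nhds x hε),
      le_antisymm hμ zero_le⟩
  have hμS : μ S = 1 := by
    have h := measure_add_measure_compl (μ := μ) hSmeas
    rw [hSc_null, add_zero] at h
    simpa using h
  -- the correlation integral as an integral of ball masses
  have hmeasset : ∀ ε : ℝ,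
      MeasurableSet {q : EuclideanSpace ℝ (Fin N) × EuclideanSpace ℝ (Fin N) | dist q.1 q.2 < ε} :=
    fun ε => (isOpen_lt continuous_dist continuous_const).measurableSet
  have hcorr : ∀ ε : ℝ, corrIntegral μ ε = ∫⁻ x, μ (Metric.ball x ε) ∂μ := by
    intro ε
    rw [corrIntegral, Measure.prod_apply (hmeasset ε)]
    refine lintegral_congr fun x => ?_
    congr 1
    ext y
    simp [Metric.mem_ball, dist_comm]
  -- the key bounds on the correlation integral
  have hbound : ∀ ε : ℝ, 0 < ε → ε < ε₀ →
      ENNReal.ofReal (c * ε ^ d) ≤ corrIntegral μ ε ∧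
      corrIntegral μ ε ≤ ENNReal.ofReal (C * ε ^ d) := by
    intro ε h1 h2
    constructor
    · rw [hcorr]
      calc ENNReal.ofReal (c * ε ^ d) = ∫⁻ _ in S, ENNReal.ofReal (c * ε ^ d) ∂μ := by
            rw [setLIntegral_const, hμS, mul_one]
        _ ≤ ∫⁻ x in S, μ (Metric.ball x ε) ∂μ :=
            setLIntegral_mono' hSmeas fun x hx => (hball x hx ε h1 h2).1
        _ ≤ ∫⁻ x, μ (Metric.ball x ε) ∂μ := setLIntegral_le_lintegral _ _
    · rw [hcorr]
      calc ∫⁻ x, μ (Metric.ball x ε) ∂μ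
          = ∫⁻ x in S, μ (Metric.ball x ε) ∂μ + ∫⁻ x in Sᶜ, μ (Metric.ball x ε) ∂μ :=
            (lintegral_add_compl _ hSmeas).symm
        _ = ∫⁻ x in S, μ (Metric.ball x ε) ∂μ := by
            rw [setLIntegral_measure_zero _ _ hSc_null, add_zero]
        _ ≤ ∫⁻ _ in S, ENNReal.ofReal (C * ε ^ d) ∂μ :=
            setLIntegral_mono' hSmeas fun x hx => (hball x hx ε h1 h2).2
        _ = ENNReal.ofReal (C * ε ^ d) := by rw [setLIntegral_const, hμS, mul_one]
  -- real-valued bounds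
  have hreal : ∀ ε : ℝ, 0 < ε → ε < ε₀ →
      c * ε ^ d ≤ (corrIntegral μ ε).toReal ∧ (corrIntegral μ ε).toReal ≤ C * ε ^ d := by
    intro ε h1 h2
    obtain ⟨hl, hu⟩ := hbound ε h1 h2
    have hfin : corrIntegral μ ε ≠ ⊤ := ne_top_of_le_ne_top ofReal_ne_top hu
    constructor
    · have := ENNReal.toReal_mono hfin hl
      rwa [ENNReal.toReal_ofReal (by positivity)] at this
    · exact ENNReal.toReal_le_of_le_ofReal (by positivity) hu
  -- limits of the bounding functions
  have hinv : Tendsto (fun ε : ℝ => (Real.log ε)⁻¹) (𝓝[>] 0) (𝓝 0) := by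
    have h2 : Tendsto (fun x : ℝ => -Real.log x) (𝓝[>] 0) atTop :=
      tendsto_neg_atBot_atTop.comp Real.tendsto_log_nhdsGT_zero
    have h3 := tendsto_inv_atTop_zero.comp h2
    have h4 := h3.neg
    simp only [Function.comp_def, inv_neg, neg_neg, neg_zero] at h4
    exact h4
  have hg : ∀ a : ℝ, Tendsto (fun ε : ℝ => a * (Real.log ε)⁻¹ + d) (𝓝[>] 0) (𝓝 d) := by
    intro a
    have := (hinv.const_mul a).add_const d
    simpa using this
  -- squeeze
  set δ := min ε₀ 1 with hδdef
  have hδ : 0 < δ := lt_min hε₀ one_pos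
  have hmem : Set.Ioo (0 : ℝ) δ ∈ 𝓝[>] (0 : ℝ) := Ioo_mem_nhdsGT_of_mem ⟨le_refl 0, hδ⟩
  refine tendsto_of_tendsto_of_tendsto_of_le_of_le' (hg (Real.log C)) (hg (Real.log c)) ?_ ?_
  · filter_upwards [hmem] with ε hε
    obtain ⟨h1, h2⟩ := hε
    have hεε₀ : ε < ε₀ := lt_of_lt_of_le h2 (min_le_left _ _)
    have hε1 : ε < 1 := lt_of_lt_of_le h2 (min_le_right _ _)
    have hL : Real.log ε < 0 := Real.log_neg h1 hε1
    have hLne : Real.log ε ≠ 0 := ne_of_lt hL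
    obtain ⟨hlo, _⟩ := hreal ε h1 hεε₀
    have hpos : (0 : ℝ) < c * ε ^ d := by positivity
    have hAlog : Real.log C + d * Real.log ε ≤ Real.log (corrIntegral μ ε).toReal → True := fun _ => trivial
    -- upper log bound: log A ≤ log (C ε^d)
    have hup : Real.log (corrIntegral μ ε).toReal ≤ Real.log C + d * Real.log ε := by
      have := Real.log_le_log (lt_of_lt_of_le hpos hlo) ((hreal ε h1 hεε₀).2)
      rwa [Real.log_mul (ne_of_gt hC) (by positivity), Real.log_rpow h1] at this
    calc Real.log C * (Real.log ε)⁻¹ + d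
        = (Real.log C + d * Real.log ε) / Real.log ε := by
          field_simp
        _ ≤ Real.log (corrIntegral μ ε).toReal / Real.log ε :=
          div_le_div_of_nonpos_of_le (le_of_lt hL) hup
  · filter_upwards [hmem] with ε hε
    obtain ⟨h1, h2⟩ := hε
    have hεε₀ : ε < ε₀ := lt_of_lt_of_le h2 (min_le_left _ _)
    have hε1 : ε < 1 := lt_of_lt_of_le h2 (min_le_right _ _)
    have hL : Real.log ε < 0 := Real.log_neg h1 hε1
    have hLne : Real.log ε ≠ 0 := ne_of_lt hL
    obtain ⟨hlo, _⟩ := hreal ε h1 hεε₀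
    have hpos : (0 : ℝ) < c * ε ^ d := by positivity
    have hdn : Real.log c + d * Real.log ε ≤ Real.log (corrIntegral μ ε).toReal := by
      have := Real.log_le_log hpos hlo
      rwa [Real.log_mul (ne_of_gt hc) (by positivity), Real.log_rpow h1] at this
    calc Real.log (corrIntegral μ ε).toReal / Real.log ε
        ≤ (Real.log c + d * Real.log ε) / Real.log ε :=
          div_le_div_of_nonpos_of_le (le_of_lt hL) hdn
        _ = Real.log c * (Real.log ε)⁻¹ + d := by field_simp
end

section
/- Let μ be a Borel probability measure on ℝ^N, let α ≥ 0, and set D_α := {x ∈ ℝ^N : D̲_μ(x) ≤ α}, where D̲_μ(x) is the lower pointwise dimension of μ at x. Then the Hausdorff dimension of D_α satisfies dim_H(D_α) ≤ α. -/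
open MeasureTheory Filter Metric Topology ENNReal

/-- The lower pointwise dimension of `μ` at `x`, valued in `EReal` so that points whose small
balls have measure zero get dimension `+∞`:
`liminf_{ε → 0⁺} log μ(B(x,ε)) / log ε` (with `log 0 = ⊥` in `EReal`). -/
noncomputable def lowerPointwiseDimE {X : Type*} [MetricSpace X] [MeasurableSpace X]
    (μ : Measure X) (x : X) : EReal :=
  liminf (fun ε : ℝ => ENNReal.log (μ (Metric.ball x ε)) * (((Real.log ε)⁻¹ : ℝ) : EReal))
    (𝓝[>] 0)

/-- Mass distribution principle, upper direction: if at every point of `s` there are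
arbitrarily small radii `r` with `μ (ball x r) ≥ r ^ d`, then `μH[d] s` is finite. -/
lemma hausdorffMeasure_le_of_frequently_measure_ball_ge {N : ℕ}
    (μ : Measure (EuclideanSpace ℝ (Fin N))) [IsProbabilityMeasure μ]
    {d : ℝ} (hd : 0 < d) (s : Set (EuclideanSpace ℝ (Fin N)))
    (hs : ∀ x ∈ s, ∃ᶠ r in 𝓝[>] (0 : ℝ), ENNReal.ofReal (r ^ d) ≤ μ (Metric.ball x r)) :
    μH[d] s ≤ ENNReal.ofReal (10 ^ d) := by
  classical
  -- choose good radii at every scale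
  have key : ∀ n : ℕ, ∀ x ∈ s, ∃ ρ : ℝ,
      ρ ∈ Set.Ioo (0 : ℝ) ((n : ℝ) + 1)⁻¹ ∧ ENNReal.ofReal (ρ ^ d) ≤ μ (Metric.ball x ρ) := by
    intro n x hx
    have h1 : Set.Ioo (0 : ℝ) ((n : ℝ) + 1)⁻¹ ∈ 𝓝[>] (0 : ℝ) :=
      Ioo_mem_nhdsGT_of_mem ⟨le_refl _, by positivity⟩
    obtain ⟨ρ, hρ1, hρ2⟩ := ((hs x hx).and_eventually (eventually_mem_set.2 h1)).exists
    exact ⟨ρ, hρ2, hρ1⟩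
  choose! ρ hρmem hρμ using key
  -- Vitali covering at every scale
  have cov : ∀ n : ℕ, ∃ u ⊆ s, u.Countable ∧
      (u.PairwiseDisjoint fun b => Metric.closedBall b (ρ n b)) ∧
      s ⊆ ⋃ b ∈ u, Metric.closedBall b (4 * ρ n b) := by
    intro n
    obtain ⟨u, hus, hdisj, hcov⟩ :=
      Vitali.exists_disjoint_subfamily_covering_enlargement_closedBall s
        (id : EuclideanSpace ℝ (Fin N) → EuclideanSpace ℝ (Fin N)) (fun b => ρ n b)
        ((n : ℝ) + 1)⁻¹ (fun b hb => (hρmem n b hb).2.le) 4 (by norm_num)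
    refine ⟨u, hus, ?_, hdisj, ?_⟩
    · refine hdisj.countable_of_nonempty_interior fun b hb => ?_
      have hpos : 0 < ρ n b := (hρmem n b (hus hb)).1
      show (interior (Metric.closedBall (id b) (ρ n b))).Nonempty
      rw [interior_closedBall (id b) hpos.ne']
      exact ⟨b, Metric.mem_ball_self hpos⟩
    · intro a ha
      obtain ⟨b, hb, hsub⟩ := hcov a ha
      have : a ∈ Metric.closedBall (id a) (ρ n a) :=
        Metric.mem_closedBall_self (hρmem n a ha).1.le
      exact Set.mem_biUnion hb (hsub this)
  choose u hus hucount hudisj hucov using cov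
  haveI : ∀ n, Countable (u n) := fun n => (hucount n).to_subtype
  -- apply the covering estimate for Hausdorff measure
  have main : μH[d] s ≤
      liminf (fun n : ℕ => ∑' b : u n,
        EMetric.diam (Metric.closedBall (b : EuclideanSpace ℝ (Fin N)) (4 * ρ n b)) ^ d)
      atTop := by
    refine Measure.hausdorffMeasure_le_liminf_tsum d s
      (fun n : ℕ => ENNReal.ofReal (10 * ((n : ℝ) + 1)⁻¹)) ?_ _ ?_ ?_
    · have h0 : Tendsto (fun n : ℕ => ((n : ℝ) + 1)⁻¹) atTop (𝓝 0) := by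
        simpa only [one_div] using tendsto_one_div_add_atTop_nhds_zero_nat (𝕜 := ℝ)
      have := (h0.const_mul (10 : ℝ))
      rw [mul_zero] at this
      have := (ENNReal.continuous_ofReal.tendsto 0).comp this
      simpa only [Function.comp_def, ENNReal.ofReal_zero] using this
    · refine Eventually.of_forall fun n => fun b => ?_
      by_cases hb : (b : EuclideanSpace ℝ (Fin N)) ∈ s
      · have hpos : 0 < ρ n b := (hρmem n b hb).1
        have h4 : (0 : ℝ) ≤ 4 * ρ n b := by positivity
        calc EMetric.diam (Metric.closedBall (b : EuclideanSpace ℝ (Fin N)) (4 * ρ n b))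
            ≤ 2 * ENNReal.ofReal (4 * ρ n b) := by
              rw [← Metric.emetric_closedBall h4]
              exact EMetric.diam_closedBall
          _ = ENNReal.ofReal (8 * ρ n b) := by
              rw [← ENNReal.ofReal_ofNat, ← ENNReal.ofReal_mul (by norm_num)]
              ring_nf
          _ ≤ ENNReal.ofReal (10 * ((n : ℝ) + 1)⁻¹) := by
              refine ENNReal.ofReal_le_ofReal ?_
              have := (hρmem n b hb).2.le
              nlinarith [hpos.le]
      · exact absurd (hus n b.2) hb
    · refine Eventually.of_forall fun n => ?_
      intro a ha
      obtain ⟨b, hb, hab⟩ := Set.mem_iUnion₂.1 (hucov n ha)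
      exact Set.mem_iUnion.2 ⟨⟨b, hb⟩, hab⟩
  refine main.trans ?_
  -- bound each term by 10^d using disjointness
  have term_bound : ∀ n : ℕ, (∑' b : u n,
      EMetric.diam (Metric.closedBall (b : EuclideanSpace ℝ (Fin N)) (4 * ρ n b)) ^ d)
      ≤ ENNReal.ofReal (10 ^ d) := by
    intro n
    have step1 : (∑' b : u n,
        EMetric.diam (Metric.closedBall (b : EuclideanSpace ℝ (Fin N)) (4 * ρ n b)) ^ d)
        ≤ ∑' b : u n, ENNReal.ofReal (10 ^ d) * μ (Metric.closedBall
            (b : EuclideanSpace ℝ (Fin N)) (ρ n b)) := by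
      refine ENNReal.tsum_le_tsum fun b => ?_
      have hb : (b : EuclideanSpace ℝ (Fin N)) ∈ s := hus n b.2
      have hpos : 0 < ρ n b := (hρmem n b hb).1
      have h4 : (0 : ℝ) ≤ 4 * ρ n b := by positivity
      have hdiam : EMetric.diam (Metric.closedBall (b : EuclideanSpace ℝ (Fin N)) (4 * ρ n b))
          ≤ ENNReal.ofReal (8 * ρ n b) := by
        rw [← Metric.emetric_closedBall h4]
        refine EMetric.diam_closedBall.trans_eq ?_
        rw [← ENNReal.ofReal_ofNat, ← ENNReal.ofReal_mul (by norm_num)]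
        ring_nf
      calc EMetric.diam (Metric.closedBall (b : EuclideanSpace ℝ (Fin N)) (4 * ρ n b)) ^ d
          ≤ ENNReal.ofReal (8 * ρ n b) ^ d := ENNReal.rpow_le_rpow hdiam hd.le
        _ = ENNReal.ofReal ((8 * ρ n b) ^ d) := by
            rw [← ENNReal.ofReal_rpow_of_pos (by positivity)]
        _ = ENNReal.ofReal (8 ^ d * ρ n b ^ d) := by
            rw [Real.mul_rpow (by norm_num) hpos.le]
        _ ≤ ENNReal.ofReal (10 ^ d * ρ n b ^ d) := by
            refine ENNReal.ofReal_le_ofReal ?_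
            have h810 : (8 : ℝ) ^ d ≤ 10 ^ d :=
              Real.rpow_le_rpow (by norm_num) (by norm_num) hd.le
            nlinarith [Real.rpow_pos_of_pos hpos d, Real.rpow_nonneg (le_of_lt hpos) d]
        _ = ENNReal.ofReal (10 ^ d) * ENNReal.ofReal (ρ n b ^ d) := by
            rw [ENNReal.ofReal_mul (by positivity)]
        _ ≤ ENNReal.ofReal (10 ^ d) * μ (Metric.closedBall (b : EuclideanSpace ℝ (Fin N))
              (ρ n b)) := by
            refine mul_le_mul_right ((hρμ n b hb).trans (measure_mono ?_)) _
            exact Metric.ball_subset_closedBall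
    refine step1.trans ?_
    rw [ENNReal.tsum_mul_left]
    have hsum : (∑' b : u n, μ (Metric.closedBall (b : EuclideanSpace ℝ (Fin N)) (ρ n b))) ≤ 1 := by
      rw [← measure_biUnion (hucount n) (hudisj n) (fun b _ => measurableSet_closedBall)]
      exact prob_le_one
    calc ENNReal.ofReal (10 ^ d) * ∑' b : u n,
          μ (Metric.closedBall (b : EuclideanSpace ℝ (Fin N)) (ρ n b))
        ≤ ENNReal.ofReal (10 ^ d) * 1 := mul_le_mul_right hsum _
      _ = ENNReal.ofReal (10 ^ d) := mul_one _
  calc liminf (fun n : ℕ => ∑' b : u n,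
        EMetric.diam (Metric.closedBall (b : EuclideanSpace ℝ (Fin N)) (4 * ρ n b)) ^ d) atTop
      ≤ liminf (fun _ : ℕ => ENNReal.ofReal (10 ^ d)) atTop :=
        liminf_le_liminf (Eventually.of_forall term_bound)
    _ = ENNReal.ofReal (10 ^ d) := liminf_const _

/-- If the lower pointwise dimension at `x` is `≤ α`, then for every `ε > 0` there are
arbitrarily small radii `r` with `μ (ball x r) ≥ r ^ (α + ε)`. -/
lemma frequently_measure_ball_ge_of_lowerPointwiseDim_le {X : Type*} [MetricSpace X]
    [MeasurableSpace X] (μ : Measure X) [IsProbabilityMeasure μ] {x : X} {α : ℝ}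
    (hx : lowerPointwiseDimE μ x ≤ (α : EReal)) {ε : ℝ} (hε : 0 < ε) :
    ∃ᶠ r in 𝓝[>] (0 : ℝ), ENNReal.ofReal (r ^ (α + ε)) ≤ μ (Metric.ball x r) := by
  set d : ℝ := α + ε with hd_def
  have hlt : lowerPointwiseDimE μ x < (d : EReal) := by
    refine lt_of_le_of_lt hx ?_
    exact_mod_cast (lt_add_of_pos_right α hε)
  have hfreq : ∃ᶠ r in 𝓝[>] (0 : ℝ),
      ENNReal.log (μ (Metric.ball x r)) * (((Real.log r)⁻¹ : ℝ) : EReal) < (d : EReal) :=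
    frequently_lt_of_liminf_lt (by isBoundedDefault) hlt
  have h01 : ∀ᶠ r in 𝓝[>] (0 : ℝ), r ∈ Set.Ioo (0 : ℝ) 1 :=
    eventually_mem_set.2 ((Ioo_mem_nhdsGT_of_mem ⟨le_refl _, one_pos⟩))
  refine (hfreq.and_eventually h01).mono ?_
  rintro r ⟨hr, hr0, hr1⟩
  set m : ℝ≥0∞ := μ (Metric.ball x r) with hm_def
  have hm_top : m ≠ ⊤ := measure_ne_top μ _
  have hlogr_neg : Real.log r < 0 := Real.log_neg hr0 hr1
  have hinv_neg : (Real.log r)⁻¹ < 0 := inv_lt_zero.mpr hlogr_neg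
  have hm0 : m ≠ 0 := by
    intro h0
    rw [h0] at hr
    rw [ENNReal.log_zero, EReal.bot_mul_coe_of_neg hinv_neg] at hr
    exact (not_top_lt hr).elim
  have hmtoReal : 0 < m.toReal := ENNReal.toReal_pos hm0 hm_top
  have hlogm : ENNReal.log m = ((Real.log m.toReal : ℝ) : EReal) := by
    conv_lhs => rw [← ENNReal.ofReal_toReal hm_top]
    exact ENNReal.log_ofReal_of_pos hmtoReal
  rw [hlogm, ← EReal.coe_mul, EReal.coe_lt_coe_iff] at hr
  -- from `log m / log r < d` with `log r < 0`, get `d * log r < log m`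
  have hdiv : Real.log m.toReal / Real.log r < d := by
    rwa [div_eq_mul_inv]
  have hmul : d * Real.log r < Real.log m.toReal := (div_lt_iff_of_neg hlogr_neg).1 hdiv
  have hlog_rp : Real.log (r ^ d) = d * Real.log r := Real.log_rpow hr0 d
  have hrp_pos : 0 < r ^ d := Real.rpow_pos_of_pos hr0 d
  have hlt' : r ^ d < m.toReal := by
    have : Real.log (r ^ d) < Real.log m.toReal := by rw [hlog_rp]; exact hmul
    exact (Real.log_lt_log_iff hrp_pos hmtoReal).1 this
  calc ENNReal.ofReal (r ^ (α + ε)) ≤ ENNReal.ofReal m.toReal :=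
        ENNReal.ofReal_le_ofReal hlt'.le
    _ = m := ENNReal.ofReal_toReal hm_top

/-- Cutler's theorem, first half: the set of points where the lower pointwise dimension of `μ`
is at most `α` has Hausdorff dimension at most `α`. -/
theorem dimH_le_of_lowerPointwiseDim_le {N : ℕ}
    (μ : Measure (EuclideanSpace ℝ (Fin N))) [IsProbabilityMeasure μ]
    (α : ℝ) (hα : 0 ≤ α) :
    dimH {x : EuclideanSpace ℝ (Fin N) | lowerPointwiseDimE μ x ≤ (α : EReal)}
      ≤ ENNReal.ofReal α := by
  set s := {x : EuclideanSpace ℝ (Fin N) | lowerPointwiseDimE μ x ≤ (α : EReal)} with hs_def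
  refine ENNReal.le_of_forall_pos_le_add fun ε hε _ => ?_
  have hεpos : (0 : ℝ) < ε := hε
  set d : ℝ := α + ε with hd_def
  have hdpos : 0 < d := by positivity
  have hfreq : ∀ x ∈ s, ∃ᶠ r in 𝓝[>] (0 : ℝ),
      ENNReal.ofReal (r ^ d) ≤ μ (Metric.ball x r) := fun x hx =>
    frequently_measure_ball_ge_of_lowerPointwiseDim_le μ hx hεpos
  have hH : μH[d] s ≤ ENNReal.ofReal (10 ^ d) :=
    hausdorffMeasure_le_of_frequently_measure_ball_ge μ hdpos s hfreq
  have hne : μH[(d.toNNReal : ℝ)] s ≠ ⊤ := by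
    rw [Real.coe_toNNReal d hdpos.le]
    exact ne_top_of_le_ne_top ENNReal.ofReal_ne_top hH
  have := dimH_le_of_hausdorffMeasure_ne_top hne
  refine this.trans ?_
  have heq : (d.toNNReal : ℝ≥0∞) = ENNReal.ofReal α + (ε : ℝ≥0∞) := by
    rw [show (d.toNNReal : ℝ≥0∞) = ENNReal.ofReal d from rfl, hd_def,
      ENNReal.ofReal_add hα hεpos.le, ENNReal.ofReal_coe_nnreal]
  exact heq.le
end

section
/- Let μ be a Borel probability measure on ℝ^N, let α ≥ 0, and set D_α := {x ∈ ℝ^N : D̲_μ(x) ≤ α}, where D̲_μ(x) is the lower pointwise dimension of μ at x. Then the Hausdorff dimension distribution of μ satisfies μ_H([0,α]) = μ(D_α), i.e., sup{ μ(E) : E ⊆ ℝ^N Borel with dim_H(E) ≤ α } = μ(D_α). -/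
open MeasureTheory Filter Metric Topology ENNReal

lemma ball_ge_of_ratio_lt {X : Type*} [MetricSpace X] [MeasurableSpace X]
    (μ : Measure X) [IsProbabilityMeasure μ] {x : X} {ε s : ℝ}
    (hε0 : 0 < ε) (hε1 : ε < 1)
    (h : ENNReal.log (μ (Metric.ball x ε)) * (((Real.log ε)⁻¹ : ℝ) : EReal) < (s : EReal)) :
    (ENNReal.ofReal ε) ^ s ≤ μ (Metric.ball x ε) := by
  set m := μ (Metric.ball x ε) with hm
  have hL : Real.log ε < 0 := Real.log_neg hε0 hε1
  have hLi : (Real.log ε)⁻¹ < 0 := inv_neg''.2 hL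
  have hmtop : m ≠ ⊤ := (measure_lt_top μ _).ne
  rcases eq_or_ne m 0 with h0 | h0
  · rw [h0, ENNReal.log_zero, EReal.bot_mul_coe_of_neg hLi] at h
    exact absurd h (by simp)
  · have hlog : ENNReal.log m = ((Real.log m.toReal : ℝ) : EReal) :=
      ENNReal.log_pos_real h0 hmtop
    rw [hlog, ← EReal.coe_mul, EReal.coe_lt_coe_iff] at h
    have hmt : 0 < m.toReal := ENNReal.toReal_pos h0 hmtop
    have h2 : s * Real.log ε < Real.log m.toReal := by
      rw [← div_eq_mul_inv] at h
      exact (div_lt_iff_of_neg hL).1 h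
    have h3 : Real.log (ε ^ s) < Real.log m.toReal := by
      rwa [Real.log_rpow hε0]
    have h4 : ε ^ s < m.toReal := (Real.log_lt_log_iff (Real.rpow_pos_of_pos hε0 s) hmt).1 h3
    calc (ENNReal.ofReal ε) ^ s = ENNReal.ofReal (ε ^ s) := ENNReal.ofReal_rpow_of_pos hε0
    _ ≤ ENNReal.ofReal m.toReal := ENNReal.ofReal_le_ofReal h4.le
    _ = m := ENNReal.ofReal_toReal hmtop

/-- If the "log ratio" at scale `ε ∈ (0,1)` is `> s`, then `μ(ball) ≤ ε^s`. -/
lemma ball_le_of_ratio_gt {X : Type*} [MetricSpace X] [MeasurableSpace X]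
    (μ : Measure X) [IsProbabilityMeasure μ] {x : X} {ε s : ℝ}
    (hε0 : 0 < ε) (hε1 : ε < 1)
    (h : (s : EReal) < ENNReal.log (μ (Metric.ball x ε)) * (((Real.log ε)⁻¹ : ℝ) : EReal)) :
    μ (Metric.ball x ε) ≤ (ENNReal.ofReal ε) ^ s := by
  set m := μ (Metric.ball x ε) with hm
  have hL : Real.log ε < 0 := Real.log_neg hε0 hε1
  have hmtop : m ≠ ⊤ := (measure_lt_top μ _).ne
  rcases eq_or_ne m 0 with h0 | h0
  · simp [h0]
  · have hlog : ENNReal.log m = ((Real.log m.toReal : ℝ) : EReal) :=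
      ENNReal.log_pos_real h0 hmtop
    rw [hlog, ← EReal.coe_mul, EReal.coe_lt_coe_iff] at h
    have hmt : 0 < m.toReal := ENNReal.toReal_pos h0 hmtop
    have h2 : Real.log m.toReal < s * Real.log ε := by
      rw [← div_eq_mul_inv] at h
      exact (lt_div_iff_of_neg hL).1 h
    have h3 : Real.log m.toReal < Real.log (ε ^ s) := by
      rwa [Real.log_rpow hε0]
    have h4 : m.toReal < ε ^ s := (Real.log_lt_log_iff hmt (Real.rpow_pos_of_pos hε0 s)).1 h3
    calc m = ENNReal.ofReal m.toReal := (ENNReal.ofReal_toReal hmtop).symm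
    _ ≤ ENNReal.ofReal (ε ^ s) := ENNReal.ofReal_le_ofReal h4.le
    _ = (ENNReal.ofReal ε) ^ s := (ENNReal.ofReal_rpow_of_pos hε0).symm


/-- Mass distribution principle: if small balls centered in `F` have measure `≤ ε^s`,
then `μ F ≤ 2^s ⋅ μH[s] F`. -/
lemma measure_le_hausdorff {X : Type*} [MetricSpace X] [MeasurableSpace X] [BorelSpace X]
    (μ : Measure X) {s m : ℝ} (hs : 0 < s) (hm : 0 < m) {F : Set X}
    (hF : ∀ x ∈ F, ∀ ε : ℝ, 0 < ε → ε < m → μ (ball x ε) ≤ (ENNReal.ofReal ε) ^ s) :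
    μ F ≤ (2 : ℝ≥0∞) ^ s * μH[s] F := by
  set H := μH[s] F with hH
  rcases eq_or_ne H ⊤ with htop | htop
  · rw [htop]
    rw [ENNReal.mul_top (by simp [ENNReal.rpow_eq_zero_iff] : (2:ℝ≥0∞)^s ≠ 0)]
    exact le_top
  -- key: bound each small set intersecting F
  have key : ∀ t : Set X, EMetric.diam t ≤ ENNReal.ofReal (min (m/4) 1) →
      μ (t ∩ F) ≤ (2:ℝ≥0∞)^s * ⨆ _ : t.Nonempty, EMetric.diam t ^ s := by
    intro t ht
    rcases (t ∩ F).eq_empty_or_nonempty with he | ⟨x, hxt, hxF⟩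
    · simp [he]
    have htne : t.Nonempty := ⟨x, hxt⟩
    rw [iSup_pos htne]
    rcases eq_or_ne (EMetric.diam t) 0 with hd0 | hd0
    · -- t is a subsingleton; μ (t ∩ F) = 0
      have hsub : ∀ ε : ℝ, 0 < ε → ε < m → μ (t ∩ F) ≤ (ENNReal.ofReal ε) ^ s := by
        intro ε hε hεm
        refine le_trans (measure_mono ?_) (hF x hxF ε hε hεm)
        intro y ⟨hyt, _⟩
        have : edist y x = 0 := le_antisymm (le_trans (EMetric.edist_le_diam_of_mem hyt hxt) hd0.le) zero_le'
        have : y = x := by rwa [edist_eq_zero] at this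
        simp [this, mem_ball, hε]
      have h0 : μ (t ∩ F) = 0 := by
        have htend : Filter.Tendsto (fun k : ℕ => (ENNReal.ofReal (m / (k+2))) ^ s) Filter.atTop (nhds 0) := by
          have h1 : Filter.Tendsto (fun k : ℕ => m / (k+2 : ℝ)) Filter.atTop (nhds 0) := by
            apply Filter.Tendsto.div_atTop tendsto_const_nhds
            exact Filter.tendsto_atTop_add_const_right _ 2 tendsto_natCast_atTop_atTop
          have h2 : Filter.Tendsto (fun k : ℕ => ENNReal.ofReal (m / (k+2))) Filter.atTop (nhds 0) := by
            simpa [Function.comp_def] using (ENNReal.continuous_ofReal.tendsto 0).comp h1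
          have h3 := Filter.Tendsto.ennrpow_const s h2
          rwa [ENNReal.zero_rpow_of_pos hs] at h3
        refine le_antisymm ?_ zero_le'
        refine ge_of_tendsto htend ?_
        filter_upwards [] with k
        apply hsub
        · positivity
        · rw [div_lt_iff₀ (by positivity)]
          nlinarith [hm]
      simp [h0]
    · -- positive diameter
      have hdtop : EMetric.diam t ≠ ⊤ := by
        refine ne_top_of_le_ne_top ofReal_ne_top ht
      set d := (EMetric.diam t).toReal with hdd
      have hdpos : 0 < d := ENNReal.toReal_pos hd0 hdtop
      have hdm : d ≤ min (m/4) 1 := by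
        have := ENNReal.toReal_mono ofReal_ne_top ht
        rwa [ENNReal.toReal_ofReal (by positivity)] at this
      have hsubset : t ⊆ ball x (2*d) := by
        intro y hyt
        have : edist y x ≤ EMetric.diam t := EMetric.edist_le_diam_of_mem hyt hxt
        have hdist : dist y x ≤ d := by
          rw [dist_edist]
          exact ENNReal.toReal_mono hdtop this
        rw [mem_ball]
        linarith
      have h2dm : 2*d < m := by
        have : d ≤ m/4 := le_trans hdm (min_le_left _ _)
        linarith
      calc μ (t ∩ F) ≤ μ (ball x (2*d)) := measure_mono (fun y hy => hsubset hy.1)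
      _ ≤ (ENNReal.ofReal (2*d)) ^ s := hF x hxF _ (by positivity) h2dm
      _ = (2:ℝ≥0∞)^s * (ENNReal.ofReal d)^s := by
          rw [ENNReal.ofReal_mul (by norm_num), ENNReal.mul_rpow_of_nonneg _ _ hs.le]
          norm_num
      _ = (2:ℝ≥0∞)^s * EMetric.diam t ^ s := by rw [hdd, ENNReal.ofReal_toReal hdtop]
  -- now use the cover formula
  refine ENNReal.le_of_forall_pos_le_add fun ε hε hfin => ?_
  set η : ℝ≥0∞ := (ε : ℝ≥0∞) / (2:ℝ≥0∞)^s with hη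
  have h2s0 : (2:ℝ≥0∞)^s ≠ 0 := by simp [ENNReal.rpow_eq_zero_iff]
  have h2stop : (2:ℝ≥0∞)^s ≠ ⊤ := by simp [ENNReal.rpow_eq_top_iff]
  have hη0 : η ≠ 0 := by
    simp only [hη, ne_eq, ENNReal.div_eq_zero_iff]
    push_neg
    exact ⟨by exact_mod_cast hε.ne', h2stop⟩
  set r0 : ℝ≥0∞ := ENNReal.ofReal (min (m/4) 1) with hr0
  have hr0pos : 0 < r0 := by
    rw [hr0, ENNReal.ofReal_pos]
    positivity
  have hinf : (⨅ (t : ℕ → Set X) (_ : F ⊆ ⋃ n, t n) (_ : ∀ n, EMetric.diam (t n) ≤ r0),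
      ∑' n, ⨆ _ : (t n).Nonempty, EMetric.diam (t n) ^ s) ≤ H := by
    rw [hH, MeasureTheory.Measure.hausdorffMeasure_apply]
    exact le_iSup₂ (f := fun r (_ : 0 < r) => ⨅ (t : ℕ → Set X) (_ : F ⊆ ⋃ n, t n)
      (_ : ∀ n, EMetric.diam (t n) ≤ r), ∑' n, ⨆ _ : (t n).Nonempty, EMetric.diam (t n) ^ s)
      r0 hr0pos
  have hlt : (⨅ (t : ℕ → Set X) (_ : F ⊆ ⋃ n, t n) (_ : ∀ n, EMetric.diam (t n) ≤ r0),
      ∑' n, ⨆ _ : (t n).Nonempty, EMetric.diam (t n) ^ s) < H + η :=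
    lt_of_le_of_lt hinf (ENNReal.lt_add_right htop hη0)
  rw [iInf_lt_iff] at hlt
  obtain ⟨t, hlt⟩ := hlt
  rw [iInf_lt_iff] at hlt
  obtain ⟨hcov, hlt⟩ := hlt
  rw [iInf_lt_iff] at hlt
  obtain ⟨hdiam, hsum⟩ := hlt
  calc μ F ≤ μ (⋃ n, t n ∩ F) := by
        refine measure_mono fun y hy => ?_
        obtain ⟨_, ⟨n, rfl⟩, hyn⟩ := hcov hy
        exact Set.mem_iUnion.2 ⟨n, hyn, hy⟩
  _ ≤ ∑' n, μ (t n ∩ F) := measure_iUnion_le _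
  _ ≤ ∑' n, (2:ℝ≥0∞)^s * ⨆ _ : (t n).Nonempty, EMetric.diam (t n) ^ s :=
      ENNReal.tsum_le_tsum fun n => key (t n) (hdiam n)
  _ = (2:ℝ≥0∞)^s * ∑' n, ⨆ _ : (t n).Nonempty, EMetric.diam (t n) ^ s := by
      rw [ENNReal.tsum_mul_left]
  _ ≤ (2:ℝ≥0∞)^s * (H + η) := mul_le_mul_right hsum.le _
  _ = (2:ℝ≥0∞)^s * H + (2:ℝ≥0∞)^s * η := by rw [mul_add]
  _ = (2:ℝ≥0∞)^s * H + ε := by rw [hη, ENNReal.mul_div_cancel h2s0 h2stop]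


lemma hausdorff_ne_top_of_freq {N : ℕ} (μ : Measure (EuclideanSpace ℝ (Fin N)))
    [IsProbabilityMeasure μ] {s : ℝ} (hs : 0 < s) :
    μH[s] {x : EuclideanSpace ℝ (Fin N) |
      ∀ δ : ℝ, 0 < δ → ∃ ε : ℝ, 0 < ε ∧ ε < δ ∧ (ENNReal.ofReal ε) ^ s ≤ μ (ball x ε)} ≠ ⊤ := by
  set X := EuclideanSpace ℝ (Fin N)
  set A := {x : X | ∀ δ : ℝ, 0 < δ → ∃ ε : ℝ, 0 < ε ∧ ε < δ ∧ (ENNReal.ofReal ε) ^ s ≤ μ (ball x ε)}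
    with hA
  obtain ⟨N₀, τ, hτ, hSC⟩ := HasBesicovitchCovering.no_satelliteConfig (α := X)
  have hex : ∀ (n : ℕ) (x : A), ∃ ε : ℝ, 0 < ε ∧ ε < 1/(n+1) ∧
      (ENNReal.ofReal ε) ^ s ≤ μ (ball (x:X) ε) := fun n x => x.2 _ (by positivity)
  choose r hr0 hr1 hr2 using hex
  have hpkg : ∀ n : ℕ, ∃ u : Fin N₀ → Set A,
      (∀ i, (u i).PairwiseDisjoint fun j => closedBall (j : X) (r n j)) ∧
      Set.range (Subtype.val : A → X) ⊆ ⋃ i, ⋃ j ∈ u i, ball (j : X) (r n j) := by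
    intro n
    exact Besicovitch.exist_disjoint_covering_families hτ hSC
      ⟨Subtype.val, r n, hr0 n, 1/(n+1), fun x => (hr1 n x).le⟩
  choose u hu hu' using hpkg
  have hcnt : ∀ n i, (u n i).Countable := by
    intro n i
    refine (hu n i).countable_of_nonempty_interior fun j _ => ?_
    rw [interior_closedBall _ (hr0 n j).ne']
    exact ⟨j, mem_ball_self (hr0 n j)⟩
  haveI : ∀ n i, Countable (u n i) := fun n i => (hcnt n i).to_subtype
  -- the sum bound for each n
  have hbound : ∀ n : ℕ,
      (∑' p : (Σ i : Fin N₀, u n i), EMetric.diam (ball ((p.2 : A) : X) (r n p.2)) ^ s)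
        ≤ (2:ℝ≥0∞)^s * N₀ := by
    intro n
    have hterm : ∀ p : (Σ i : Fin N₀, u n i),
        EMetric.diam (ball ((p.2 : A) : X) (r n p.2)) ^ s
          ≤ (2:ℝ≥0∞)^s * μ (ball ((p.2 : A) : X) (r n p.2)) := by
      intro p
      have hd : EMetric.diam (ball ((p.2 : A) : X) (r n p.2))
          ≤ ENNReal.ofReal 2 * ENNReal.ofReal (r n p.2) := by
        rw [← ENNReal.ofReal_mul (by norm_num)]
        refine EMetric.diam_le fun y hy z hz => ?_
        rw [edist_dist]
        refine ENNReal.ofReal_le_ofReal ?_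
        have := dist_triangle y ((p.2 : A) : X) z
        rw [mem_ball] at hy hz
        rw [dist_comm z] at hz
        linarith
      calc EMetric.diam (ball ((p.2 : A) : X) (r n p.2)) ^ s
          ≤ (ENNReal.ofReal 2 * ENNReal.ofReal (r n p.2)) ^ s :=
            ENNReal.rpow_le_rpow hd hs.le
        _ = (2:ℝ≥0∞)^s * (ENNReal.ofReal (r n p.2)) ^ s := by
            rw [ENNReal.mul_rpow_of_nonneg _ _ hs.le, ENNReal.ofReal_ofNat]
        _ ≤ (2:ℝ≥0∞)^s * μ (ball ((p.2 : A) : X) (r n p.2)) :=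
            mul_le_mul_right (hr2 n p.2) _
    calc (∑' p : (Σ i : Fin N₀, u n i), EMetric.diam (ball ((p.2 : A) : X) (r n p.2)) ^ s)
        ≤ ∑' p : (Σ i : Fin N₀, u n i), (2:ℝ≥0∞)^s * μ (ball ((p.2 : A) : X) (r n p.2)) :=
          ENNReal.tsum_le_tsum hterm
      _ = (2:ℝ≥0∞)^s * ∑' p : (Σ i : Fin N₀, u n i), μ (ball ((p.2 : A) : X) (r n p.2)) :=
          ENNReal.tsum_mul_left
      _ ≤ (2:ℝ≥0∞)^s * N₀ := by
          refine mul_le_mul_right ?_ _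
          rw [ENNReal.tsum_sigma']
          calc (∑' (i : Fin N₀) (j : u n i), μ (ball ((j : A) : X) (r n j)))
              ≤ ∑' (i : Fin N₀) (j : u n i), μ (closedBall ((j : A) : X) (r n j)) :=
                ENNReal.tsum_le_tsum fun i => ENNReal.tsum_le_tsum fun j =>
                  measure_mono ball_subset_closedBall
            _ ≤ ∑' (_ : Fin N₀), 1 := by
                refine ENNReal.tsum_le_tsum fun i => ?_
                rw [← measure_biUnion (hcnt n i) (hu n i)
                  (fun b _ => measurableSet_closedBall)]
                exact prob_le_one
            _ = N₀ := by simp [tsum_fintype]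
  -- apply the covering bound for Hausdorff measure
  have hle : μH[s] A ≤ liminf
      (fun n : ℕ => ∑' p : (Σ i : Fin N₀, u n i),
        EMetric.diam (ball ((p.2 : A) : X) (r n p.2)) ^ s) atTop := by
    refine MeasureTheory.Measure.hausdorffMeasure_le_liminf_tsum s A
      (l := atTop) (fun n : ℕ => ENNReal.ofReal (2/(n+1))) ?_
      (fun (n : ℕ) (p : (Σ i : Fin N₀, u n i)) => ball ((p.2 : A) : X) (r n p.2)) ?_ ?_
    · have : Tendsto (fun n : ℕ => (2:ℝ)/(n+1)) atTop (𝓝 0) := by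
        apply Filter.Tendsto.div_atTop tendsto_const_nhds
        exact Filter.tendsto_atTop_add_const_right _ 1 tendsto_natCast_atTop_atTop
      simpa [Function.comp_def] using (ENNReal.continuous_ofReal.tendsto 0).comp this
    · refine Filter.Eventually.of_forall fun n => fun p => EMetric.diam_le fun y hy z hz => ?_
      rw [edist_dist]
      refine ENNReal.ofReal_le_ofReal ?_
      have := dist_triangle y ((p.2 : A) : X) z
      rw [mem_ball] at hy hz
      rw [dist_comm z] at hz
      have h2 : 2/((n:ℝ)+1) = 2*(1/((n:ℝ)+1)) := by ring
      linarith [hr1 n p.2]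
    · refine Filter.Eventually.of_forall fun n => fun x hx => ?_
      have : (⟨x, hx⟩ : A).1 ∈ Set.range (Subtype.val : A → X) := ⟨⟨x, hx⟩, rfl⟩
      obtain ⟨_, ⟨i, rfl⟩, hmem⟩ := hu' n this
      obtain ⟨_, ⟨j, rfl⟩, hmem⟩ := hmem
      obtain ⟨_, ⟨hj, rfl⟩, hmem⟩ := hmem
      exact Set.mem_iUnion.2 ⟨⟨i, ⟨j, hj⟩⟩, hmem⟩
  have hfin : μH[s] A ≤ (2:ℝ≥0∞)^s * N₀ := by
    refine le_trans hle ?_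
    refine le_trans (Filter.liminf_le_liminf (Filter.Eventually.of_forall hbound)) ?_
    simp [Filter.liminf_const]
  refine ne_top_of_le_ne_top ?_ hfin
  exact ENNReal.mul_ne_top (by simp [ENNReal.rpow_eq_top_iff]) (by simp)


/-- Helper 1: a point of lower dimension `≤ α` frequently has large balls. -/
lemma freq_of_dim_le {X : Type*} [MetricSpace X] [MeasurableSpace X]
    (μ : Measure X) [IsProbabilityMeasure μ] {x : X} {α s : ℝ}
    (h : lowerPointwiseDimE μ x ≤ (α : EReal)) (hαs : α < s) :
    ∀ δ : ℝ, 0 < δ → ∃ ε : ℝ, 0 < ε ∧ ε < δ ∧ (ENNReal.ofReal ε) ^ s ≤ μ (ball x ε) := by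
  intro δ hδ
  have hlt : liminf (fun ε : ℝ =>
      ENNReal.log (μ (ball x ε)) * (((Real.log ε)⁻¹ : ℝ) : EReal)) (𝓝[>] 0) < (s : EReal) :=
    lt_of_le_of_lt h (by exact_mod_cast hαs)
  have hfreq := Filter.frequently_lt_of_liminf_lt (h := hlt)
  have hev : ∀ᶠ ε in 𝓝[>] (0:ℝ), ε ∈ Set.Ioo (0:ℝ) (min δ 1) :=
    Ioo_mem_nhdsGT_of_mem ⟨le_rfl, lt_min hδ one_pos⟩
  obtain ⟨ε, hlt', hmem⟩ := (hfreq.and_eventually hev).exists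
  exact ⟨ε, hmem.1, lt_of_lt_of_le hmem.2 (min_le_left _ _),
    ball_ge_of_ratio_lt μ hmem.1 (lt_of_lt_of_le hmem.2 (min_le_right _ _)) hlt'⟩

/-- Helper 2: a point of lower dimension `> α` has uniformly small balls at scale `q > α`. -/
lemma small_of_dim_gt {X : Type*} [MetricSpace X] [MeasurableSpace X]
    (μ : Measure X) [IsProbabilityMeasure μ] {x : X} {α : ℝ}
    (h : (α : EReal) < lowerPointwiseDimE μ x) :
    ∃ q : ℚ, α < (q:ℝ) ∧ ∃ m : ℕ, ∀ ε : ℝ, 0 < ε → ε < 1/(m+1) →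
      μ (ball x ε) ≤ (ENNReal.ofReal ε) ^ (q:ℝ) := by
  obtain ⟨q, hq1, hq2⟩ := EReal.exists_rat_btwn_of_lt h
  refine ⟨q, by exact_mod_cast hq1, ?_⟩
  have hev : ∀ᶠ ε in 𝓝[>] (0:ℝ), ((q:ℝ) : EReal) <
      ENNReal.log (μ (ball x ε)) * (((Real.log ε)⁻¹ : ℝ) : EReal) :=
    Filter.eventually_lt_of_lt_liminf hq2
  rw [Filter.eventually_iff, mem_nhdsGT_iff_exists_Ioo_subset] at hev
  obtain ⟨a, ha, hsub⟩ := hev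
  obtain ⟨m, hm⟩ := exists_nat_one_div_lt (lt_min ha one_pos : (0:ℝ) < min a 1)
  refine ⟨m, fun ε hε0 hεm => ?_⟩
  have hεa : ε < min a 1 := lt_trans hεm hm
  have hmem : ε ∈ Set.Ioo (0:ℝ) a := ⟨hε0, lt_of_lt_of_le hεa (min_le_left _ _)⟩
  exact ball_le_of_ratio_gt μ hε0 (lt_of_lt_of_le hεa (min_le_right _ _)) (hsub hmem)
/-- Cutler's theorem, second half: the Hausdorff dimension distribution of `μ` satisfies
`μ_H([0,α]) = μ(D_α)` where `D_α = {x : D̲_μ(x) ≤ α}`; the left side is the supremum of `μ(E)`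
over Borel sets `E` of Hausdorff dimension at most `α`. -/
theorem hausdorffDimDistribution_eq_measure_of_lowerPointwiseDim_le {N : ℕ}
    (μ : Measure (EuclideanSpace ℝ (Fin N))) [IsProbabilityMeasure μ]
    (α : ℝ) (hα : 0 ≤ α) :
    (⨆ (E : Set (EuclideanSpace ℝ (Fin N))) (_ : MeasurableSet E)
        (_ : dimH E ≤ ENNReal.ofReal α), μ E)
      = μ {x : EuclideanSpace ℝ (Fin N) | lowerPointwiseDimE μ x ≤ (α : EReal)} := by
  set X := EuclideanSpace ℝ (Fin N)
  set D := {x : X | lowerPointwiseDimE μ x ≤ (α : EReal)} with hD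
  apply le_antisymm
  · -- sup ≤ μ D
    refine iSup_le fun E => iSup_le fun hE => iSup_le fun hdim => ?_
    -- μ (E \ D) = 0
    have hnull : μ (E \ D) = 0 := by
      have hcover : E \ D ⊆ ⋃ (p : {q : ℚ // α < (q:ℝ)}) (m : ℕ),
          (E ∩ {x : X | ∀ ε : ℝ, 0 < ε → ε < 1/(m+1) →
            μ (ball x ε) ≤ (ENNReal.ofReal ε) ^ ((p:ℚ):ℝ)}) := by
        rintro x ⟨hxE, hxD⟩
        rw [hD, Set.mem_setOf_eq, not_le] at hxD
        obtain ⟨q, hq, m, hm⟩ := small_of_dim_gt μ hxD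
        exact Set.mem_iUnion.2 ⟨⟨q, hq⟩, Set.mem_iUnion.2 ⟨m, hxE, hm⟩⟩
      refine measure_mono_null hcover ?_
      refine measure_iUnion_null fun p => measure_iUnion_null fun m => ?_
      set q : ℝ := ((p:ℚ):ℝ) with hq
      have hq0 : 0 < q := lt_of_le_of_lt hα p.2
      set F := E ∩ {x : X | ∀ ε : ℝ, 0 < ε → ε < 1/(m+1) →
        μ (ball x ε) ≤ (ENNReal.ofReal ε) ^ q} with hF
      have hmass : μ F ≤ (2:ℝ≥0∞)^q * μH[q] F :=
        measure_le_hausdorff μ hq0 (by positivity : (0:ℝ) < 1/(m+1))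
          (fun x hx ε hε0 hεm => hx.2 ε hε0 hεm)
      have hHF : μH[q] F = 0 := by
        have hdimlt : dimH E < (q.toNNReal : ℝ≥0∞) := by
          refine lt_of_le_of_lt hdim ?_
          have : (q.toNNReal : ℝ≥0∞) = ENNReal.ofReal q := rfl
          rw [this]
          exact (ENNReal.ofReal_lt_ofReal_iff hq0).2 p.2
        have h0 : μH[(q.toNNReal : ℝ)] E = 0 := hausdorffMeasure_of_dimH_lt hdimlt
        rw [Real.coe_toNNReal _ hq0.le] at h0
        exact measure_mono_null (Set.inter_subset_left) h0
      rw [hHF, mul_zero] at hmass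
      exact le_antisymm hmass zero_le'
    calc μ E ≤ μ ((E ∩ D) ∪ (E \ D)) := measure_mono (by rw [Set.inter_union_diff])
    _ ≤ μ (E ∩ D) + μ (E \ D) := measure_union_le _ _
    _ = μ (E ∩ D) := by rw [hnull, add_zero]
    _ ≤ μ D := measure_mono Set.inter_subset_right
  · -- μ D ≤ sup
    have hA : ∀ p : {q : ℚ // α < (q:ℝ)}, ∃ Ep : Set X,
        {x : X | ∀ δ : ℝ, 0 < δ → ∃ ε : ℝ, 0 < ε ∧ ε < δ ∧
          (ENNReal.ofReal ε) ^ ((p:ℚ):ℝ) ≤ μ (ball x ε)} ⊆ Ep ∧ MeasurableSet Ep ∧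
        μH[((p:ℚ):ℝ)] Ep = μH[((p:ℚ):ℝ)]
          {x : X | ∀ δ : ℝ, 0 < δ → ∃ ε : ℝ, 0 < ε ∧ ε < δ ∧
            (ENNReal.ofReal ε) ^ ((p:ℚ):ℝ) ≤ μ (ball x ε)} :=
      fun p => exists_measurable_superset _ _
    choose Ep hEsub hEmeas hEeq using hA
    set E : Set X := ⋂ p, Ep p with hE
    have hEm : MeasurableSet E := MeasurableSet.iInter fun p => hEmeas p
    have hdimE : dimH E ≤ ENNReal.ofReal α := by
      have hp : ∀ p : {q : ℚ // α < (q:ℝ)}, dimH E ≤ ENNReal.ofReal ((p:ℚ):ℝ) := by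
        intro p
        have hq0 : (0:ℝ) < ((p:ℚ):ℝ) := lt_of_le_of_lt hα p.2
        have hne : μH[((((p:ℚ):ℝ).toNNReal) : ℝ)] (Ep p) ≠ ⊤ := by
          rw [Real.coe_toNNReal _ hq0.le, hEeq p]
          exact hausdorff_ne_top_of_freq μ hq0
        have := dimH_le_of_hausdorffMeasure_ne_top hne
        exact le_trans (dimH_mono (Set.iInter_subset _ p)) this
      refine ENNReal.le_of_forall_pos_le_add fun ε hε _ => ?_
      obtain ⟨q, hq1, hq2⟩ := exists_rat_btwn (lt_add_of_pos_right α (by exact_mod_cast hε : (0:ℝ) < ε))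
      calc dimH E ≤ ENNReal.ofReal ((⟨q, hq1⟩ : {q : ℚ // α < (q:ℝ)}):ℚ) := hp ⟨q, hq1⟩
      _ ≤ ENNReal.ofReal (α + ε) := ENNReal.ofReal_le_ofReal hq2.le
      _ = ENNReal.ofReal α + ENNReal.ofReal ε := ENNReal.ofReal_add hα (by positivity)
      _ = ENNReal.ofReal α + ε := by rw [ENNReal.ofReal_coe_nnreal]
    have hDE : D ⊆ E := by
      intro x hx
      refine Set.mem_iInter.2 fun p => hEsub p ?_
      exact fun δ hδ => freq_of_dim_le μ hx p.2 δ hδ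
    calc μ D ≤ μ E := measure_mono hDE
    _ ≤ _ := by
      refine le_iSup_of_le E ?_
      rw [iSup_pos hEm, iSup_pos hdimE]
end

section
/- Let μ be a Borel probability measure on ℝ^N such that for μ-almost every x the pointwise dimension D_μ(x) exists and equals a fixed constant d. Then the Hausdorff dimension of μ, defined as D_H(μ) := inf{ α ∈ [0,N] : sup{ μ(E) : E ⊆ ℝ^N Borel with dim_H(E) ≤ α } = 1 }, equals d. -/
open MeasureTheory Filter Metric Topology ENNReal

section Helpers
open MeasureTheory Filter Metric Topology ENNReal Set

variable {X : Type*} [MetricSpace X] [MeasurableSpace X] [BorelSpace X]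

lemma ball_meas_lsc (μ : Measure X) (r : ℝ) (hr : 0 < r) :
    LowerSemicontinuous fun x => μ (ball x r) := by
  intro x c hc
  have hmono : Monotone fun n : ℕ => ball x (r - r / 2 / (n + 1)) := by
    intro m n hmn
    apply ball_subset_ball
    have h2 : ((m:ℝ)+1) ≤ (n:ℝ)+1 := by exact_mod_cast Nat.succ_le_succ hmn
    have := div_le_div_of_nonneg_left (by positivity : (0:ℝ) ≤ r/2)
      (by positivity : (0:ℝ) < (m:ℝ)+1) h2
    linarith
  have hU : (⋃ n : ℕ, ball x (r - r / 2 / (n + 1))) = ball x r := by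
    apply Subset.antisymm
    · refine iUnion_subset fun n => ball_subset_ball ?_
      have : (0:ℝ) < r / 2 / (n+1) := by positivity
      linarith
    · intro y hy
      have hy' : dist y x < r := hy
      obtain ⟨n, hn⟩ := exists_nat_one_div_lt (div_pos (by linarith : (0:ℝ) < r - dist y x) (by positivity : (0:ℝ) < r/2))
      refine mem_iUnion.2 ⟨n, ?_⟩
      have h2 : (0:ℝ) < r/2 := by positivity
      have := mul_lt_mul_of_pos_left hn h2
      rw [mul_div_cancel₀ _ (ne_of_gt h2)] at this
      have hδ : r / 2 / (n+1) = r/2 * (1/(n+1)) := by ring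
      have : r / 2 / (n+1) < r - dist y x := by rw [hδ]; linarith
      show dist y x < _
      linarith
  have := MeasureTheory.tendsto_measure_iUnion_atTop (μ := μ) hmono
  rw [hU] at this
  have hev : ∀ᶠ n : ℕ in atTop, c < μ (ball x (r - r / 2 / (n + 1))) :=
    this.eventually (eventually_gt_nhds hc)
  obtain ⟨n, hn⟩ := hev.exists
  have hδ : (0:ℝ) < r / 2 / (n+1) := by positivity
  filter_upwards [Metric.ball_mem_nhds x hδ] with y hy
  refine hn.trans_le (measure_mono (ball_subset_ball' ?_))
  have hxy : dist x y < r / 2 / (n+1) := by rw [dist_comm]; exact mem_ball.mp hy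
  linarith

lemma ball_meas_measurable (μ : Measure X) [OpensMeasurableSpace X] (r : ℝ) (hr : 0 < r) :
    Measurable fun x => μ (ball x r) :=
  (ball_meas_lsc μ r hr).measurable
lemma ae_ball_pos (μ : Measure X) [SecondCountableTopology X] :
    ∀ᵐ x ∂μ, ∀ r : ℝ, 0 < r → 0 < μ (ball x r) := by
  obtain ⟨D, hDc, hDd⟩ := TopologicalSpace.exists_countable_dense X
  set S : X → ℚ → Set X := fun z q => if 0 < μ (ball z (q:ℝ)) then ∅ else ball z (q:ℝ) with hS
  have hnull : μ (⋃ z ∈ D, ⋃ q : ℚ, S z q) = 0 := by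
    refine (measure_biUnion_null_iff hDc).2 fun z _ => ?_
    refine (measure_iUnion_null_iff).2 fun q => ?_
    by_cases hq : 0 < μ (ball z (q:ℝ))
    · simp [hS, hq]
    · simp only [hS, if_neg hq]
      exact le_antisymm (not_lt.1 hq) zero_le
  rw [ae_iff]
  refine measure_mono_null ?_ hnull
  intro x hx
  simp only [mem_setOf_eq, not_forall] at hx
  obtain ⟨r, hr, hxr⟩ := hx
  have hxr0 : μ (ball x r) = 0 := le_antisymm (not_lt.1 hxr) zero_le
  obtain ⟨z, hzball, hzD⟩ := Metric.dense_iff.1 hDd x (r/4) (by positivity)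
  have hzx : dist z x < r/4 := mem_ball.mp hzball
  obtain ⟨q, hq1, hq2⟩ := exists_rat_btwn (show r/4 < r/2 by linarith)
  have hq0 : (0:ℝ) < q := lt_trans (by positivity) hq1
  have hsub : ball z (q:ℝ) ⊆ ball x r := by
    intro y hy
    rw [Metric.mem_ball] at hy ⊢
    have := dist_triangle y z x
    linarith
  have hz0 : μ (ball z (q:ℝ)) = 0 := measure_mono_null hsub hxr0
  refine mem_biUnion hzD (mem_iUnion.2 ⟨q, ?_⟩)
  rw [hS]
  simp only [hz0, lt_irrefl, if_false]
  show x ∈ ball z (q:ℝ)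
  rw [mem_ball, dist_comm]
  linarith
lemma mass_dist_dimH_ge (μ : Measure X) {E : Set X} {s r₀ : ℝ} (hs : 0 < s) (hr₀ : 0 < r₀)
    (hE : ∀ x ∈ E, ∀ r : ℝ, 0 < r → r < r₀ → μ (ball x r) ≤ ENNReal.ofReal (r ^ s))
    (hμE : μ E ≠ 0) : ENNReal.ofReal s ≤ dimH E := by
  have key : μ E ≤ μH[s] E := by
    rw [MeasureTheory.Measure.hausdorffMeasure_apply]
    refine le_iSup₂_of_le (ENNReal.ofReal (r₀/4)) (ENNReal.ofReal_pos.2 (by positivity)) ?_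
    refine le_iInf fun t => le_iInf fun hcov => le_iInf fun hdiam => ?_
    calc μ E ≤ μ (⋃ n, t n ∩ E) := by
          refine measure_mono fun x hx => ?_
          obtain ⟨n, hn⟩ := mem_iUnion.1 (hcov hx)
          exact mem_iUnion.2 ⟨n, hn, hx⟩
      _ ≤ ∑' n, μ (t n ∩ E) := measure_iUnion_le _
      _ ≤ ∑' n, ⨆ _ : (t n).Nonempty, EMetric.diam (t n) ^ s := by
          refine ENNReal.tsum_le_tsum fun n => ?_
          by_cases hne : (t n ∩ E).Nonempty
          · obtain ⟨x, hxt, hxE⟩ := hne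
            rw [iSup_pos ⟨x, hxt⟩]
            set D := (EMetric.diam (t n ∩ E)).toReal with hD
            have hdle : EMetric.diam (t n ∩ E) ≤ ENNReal.ofReal (r₀/4) :=
              (EMetric.diam_mono inter_subset_left).trans (hdiam n)
            have hDfin : EMetric.diam (t n ∩ E) ≠ ∞ :=
              (hdle.trans_lt ENNReal.ofReal_lt_top).ne
            have hD0 : 0 ≤ D := ENNReal.toReal_nonneg
            have hDlt : D < r₀ := by
              have : D ≤ r₀/4 := by
                rw [hD, ← ENNReal.toReal_ofReal (by positivity : (0:ℝ) ≤ r₀/4)]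
                exact ENNReal.toReal_mono ENNReal.ofReal_ne_top hdle
              linarith
            have hkey : μ (t n ∩ E) ≤ ENNReal.ofReal (D ^ s) := by
              have htend : Tendsto (fun r : ℝ => ENNReal.ofReal (r ^ s)) (𝓝[>] D)
                  (𝓝 (ENNReal.ofReal (D ^ s))) :=
                (ENNReal.continuous_ofReal.tendsto _).comp
                  (((Real.continuousAt_rpow_const D s (Or.inr hs.le)).tendsto).mono_left
                    nhdsWithin_le_nhds)
              refine ge_of_tendsto htend ?_
              filter_upwards [Ioo_mem_nhdsGT_of_mem ⟨le_refl D, hDlt⟩] with r hr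
              have hsub : t n ∩ E ⊆ ball x r := by
                intro y hy
                have h1 : edist y x ≤ EMetric.diam (t n ∩ E) :=
                  EMetric.edist_le_diam_of_mem hy ⟨hxt, hxE⟩
                rw [mem_ball]
                have h2 : dist y x ≤ D := by
                  rw [hD]
                  rw [edist_dist] at h1
                  exact (ENNReal.toReal_mono hDfin h1).trans_eq' (ENNReal.toReal_ofReal dist_nonneg)
                exact h2.trans_lt hr.1
              exact (measure_mono hsub).trans (hE x hxE r (hD0.trans_lt hr.1) hr.2)
            refine hkey.trans ?_
            calc ENNReal.ofReal (D ^ s) = EMetric.diam (t n ∩ E) ^ s := by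
                  rw [← ENNReal.ofReal_rpow_of_nonneg hD0 hs.le, hD,
                    ENNReal.ofReal_toReal hDfin]
              _ ≤ EMetric.diam (t n) ^ s :=
                  ENNReal.rpow_le_rpow (EMetric.diam_mono inter_subset_left) hs.le
          · rw [not_nonempty_iff_eq_empty] at hne
            simp [hne]
  have h0 : μH[s] E ≠ 0 := fun hz => hμE (le_antisymm (key.trans_eq hz) zero_le)
  have := le_dimH_of_hausdorffMeasure_ne_zero (d := s.toNNReal)
    (by rwa [Real.coe_toNNReal s hs.le] : μH[(s.toNNReal : ℝ)] E ≠ 0)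
  simpa [ENNReal.ofReal] using this
lemma cover_dimH_le (μ : Measure X) [IsFiniteMeasure μ] {E : Set X} {t r₀ : ℝ}
    (ht : 0 < t) (hr₀ : 0 < r₀)
    (hE : ∀ x ∈ E, ∀ r : ℝ, 0 < r → r < r₀ → ENNReal.ofReal ((r/2) ^ t) ≤ μ (ball x r)) :
    dimH E ≤ ENNReal.ofReal t := by
  have claim : ∀ s : ℝ, t < s → μH[s] E = 0 := by
    intro s hts
    set δ : ℕ → ℝ := fun k => min (r₀/2) ((k+1 : ℝ)⁻¹) with hδdef
    have hδpos : ∀ k, 0 < δ k := fun k => lt_min (by positivity) (by positivity)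
    have hδlt : ∀ k, δ k < r₀ := fun k => (min_le_left _ _).trans_lt (by linarith)
    have hδ0 : Tendsto δ atTop (𝓝 0) := by
      have h1 : Tendsto (fun k : ℕ => ((k:ℝ)+1)⁻¹) atTop (𝓝 0) := by
        simpa [one_div] using tendsto_one_div_add_atTop_nhds_zero_nat (𝕜 := ℝ)
      have := (tendsto_const_nhds : Tendsto (fun _ : ℕ => r₀/2) atTop (𝓝 (r₀/2))).min h1
      rwa [min_eq_right (by positivity : (0:ℝ) ≤ r₀/2)] at this
    have hvit : ∀ k : ℕ, ∃ u : Set X, u ⊆ E ∧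
        (u.PairwiseDisjoint fun a => closedBall a (δ k)) ∧
        E ⊆ ⋃ b ∈ u, closedBall b (4 * δ k) := by
      intro k
      obtain ⟨u, huE, hdisj, hcov⟩ :=
        Vitali.exists_disjoint_subfamily_covering_enlargement_closedBall E id (fun _ => δ k)
          (δ k) (fun _ _ => le_rfl) 4 (by norm_num)
      refine ⟨u, huE, hdisj, fun x hx => ?_⟩
      obtain ⟨b, hb, hsub⟩ := hcov x hx
      exact mem_biUnion hb (hsub (mem_closedBall_self (hδpos k).le))
    choose u huE hdisj hcov using hvit
    have hballpos : ∀ k, ∀ b ∈ u k, 0 < μ (ball b (δ k)) := fun k b hb =>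
      lt_of_lt_of_le (ENNReal.ofReal_pos.2 (by positivity))
        (hE b (huE k hb) (δ k) (hδpos k) (hδlt k))
    have hucnt : ∀ k, (u k).Countable := by
      intro k
      classical
      have hcnt := MeasureTheory.Measure.countable_meas_pos_of_disjoint_iUnion (μ := μ)
        (As := fun b : X => if b ∈ u k then closedBall b (δ k) else ∅)
        (fun b => by by_cases h : b ∈ u k <;> simp [h, measurableSet_closedBall])
        (fun a b hab => by
          simp only [Function.onFun]
          by_cases ha : a ∈ u k
          · by_cases hb : b ∈ u k
            · simpa [ha, hb] using hdisj k ha hb hab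
            · simp [hb]
          · simp [ha])
      refine hcnt.mono fun b hb => ?_
      simp only [mem_setOf_eq, if_pos hb]
      exact lt_of_lt_of_le (hballpos k b hb) (measure_mono ball_subset_closedBall)
    haveI : ∀ k, Countable ↥(u k) := fun k => (hucnt k).to_subtype
    have hdisjball : ∀ k, Pairwise (Function.onFun Disjoint fun i : ↥(u k) => ball (i:X) (δ k)) := by
      intro k i j hij
      exact ((hdisj k) i.2 j.2 (Subtype.coe_injective.ne hij)).mono
        ball_subset_closedBall ball_subset_closedBall
    have main := MeasureTheory.Measure.hausdorffMeasure_le_liminf_tsum (d := s) E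
      (l := atTop) (r := fun k => ENNReal.ofReal (8 * δ k))
      (by
        have : Tendsto (fun k => 8 * δ k) atTop (𝓝 (8 * 0)) := hδ0.const_mul 8
        rw [mul_zero] at this
        simpa [Function.comp_def] using (ENNReal.continuous_ofReal.tendsto 0).comp this)
      (fun k (i : ↥(u k)) => closedBall (i : X) (4 * δ k))
      (Eventually.of_forall fun k i => by
        refine EMetric.diam_le fun p hp q hq => ?_
        rw [edist_dist]
        refine ENNReal.ofReal_le_ofReal ?_
        have h1 : dist p (i:X) ≤ 4 * δ k := mem_closedBall.1 hp
        have h2 : dist q (i:X) ≤ 4 * δ k := mem_closedBall.1 hq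
        calc dist p q ≤ dist p (i:X) + dist q (i:X) := dist_triangle_right _ _ _
          _ ≤ 8 * δ k := by linarith)
      (Eventually.of_forall fun k x hx => by
        obtain ⟨b, hb, hxb⟩ := mem_iUnion₂.1 (hcov k hx)
        exact mem_iUnion.2 ⟨⟨b, hb⟩, hxb⟩)
    have hsum : ∀ k, (∑' i : ↥(u k), EMetric.diam (closedBall (i:X) (4 * δ k)) ^ s) ≤
        ENNReal.ofReal ((8 * δ k) ^ s / (δ k / 2) ^ t) * μ univ := by
      intro k
      have hden : (0:ℝ) < (δ k / 2) ^ t := by positivity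
      set K := ENNReal.ofReal ((8 * δ k) ^ s) / ENNReal.ofReal ((δ k / 2) ^ t) with hK
      have hterm : ∀ i : ↥(u k),
          EMetric.diam (closedBall (i:X) (4 * δ k)) ^ s ≤ K * μ (ball (i:X) (δ k)) := by
        intro i
        have hd1 : EMetric.diam (closedBall (i:X) (4 * δ k)) ≤ ENNReal.ofReal (8 * δ k) := by
          refine EMetric.diam_le fun p hp q hq => ?_
          rw [edist_dist]
          refine ENNReal.ofReal_le_ofReal ?_
          have h1 : dist p (i:X) ≤ 4 * δ k := mem_closedBall.1 hp
          have h2 : dist q (i:X) ≤ 4 * δ k := mem_closedBall.1 hq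
          calc dist p q ≤ dist p (i:X) + dist q (i:X) := dist_triangle_right _ _ _
            _ ≤ 8 * δ k := by linarith
        calc EMetric.diam (closedBall (i:X) (4 * δ k)) ^ s
            ≤ (ENNReal.ofReal (8 * δ k)) ^ s := ENNReal.rpow_le_rpow hd1 (ht.trans hts).le
          _ = ENNReal.ofReal ((8 * δ k) ^ s) :=
              ENNReal.ofReal_rpow_of_pos (by positivity)
          _ = K * ENNReal.ofReal ((δ k / 2) ^ t) := by
              rw [hK, ENNReal.div_mul_cancel (ENNReal.ofReal_pos.2 hden).ne'
                ENNReal.ofReal_ne_top]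
          _ ≤ K * μ (ball (i:X) (δ k)) := by
              gcongr
              exact hE (i:X) (huE k i.2) (δ k) (hδpos k) (hδlt k)
      calc (∑' i : ↥(u k), EMetric.diam (closedBall (i:X) (4 * δ k)) ^ s)
          ≤ ∑' i : ↥(u k), K * μ (ball (i:X) (δ k)) := ENNReal.tsum_le_tsum hterm
        _ = K * ∑' i : ↥(u k), μ (ball (i:X) (δ k)) := ENNReal.tsum_mul_left
        _ = K * μ (⋃ i : ↥(u k), ball (i:X) (δ k)) := by
            rw [measure_iUnion (hdisjball k) (fun i => measurableSet_ball)]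
        _ ≤ K * μ univ := by gcongr; exact subset_univ _
        _ = ENNReal.ofReal ((8 * δ k) ^ s / (δ k / 2) ^ t) * μ univ := by
            rw [hK, ENNReal.ofReal_div_of_pos hden]
    have heq : ∀ k, (8 * δ k) ^ s / (δ k / 2) ^ t = (8 ^ s * 2 ^ t) * δ k ^ (s - t) := by
      intro k
      have h1 : (0:ℝ) < δ k := hδpos k
      rw [Real.mul_rpow (by norm_num) h1.le, Real.div_rpow h1.le (by norm_num),
        Real.rpow_sub h1]
      have h2 : (0:ℝ) < (2:ℝ) ^ t := Real.rpow_pos_of_pos (by norm_num) t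
      field_simp
    have hlim : Tendsto (fun k => ENNReal.ofReal ((8 * δ k) ^ s / (δ k / 2) ^ t) * μ univ)
        atTop (𝓝 0) := by
      have h1 : Tendsto (fun k => δ k ^ (s - t)) atTop (𝓝 0) := by
        have hc : ContinuousAt (fun x : ℝ => x ^ (s - t)) 0 :=
          Real.continuousAt_rpow_const 0 (s - t) (Or.inr (by linarith))
        have := hc.tendsto.comp hδ0
        rwa [Real.zero_rpow (by linarith : s - t ≠ 0)] at this
      have h2 : Tendsto (fun k => (8 ^ s * 2 ^ t) * δ k ^ (s - t)) atTop (𝓝 0) := by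
        have := h1.const_mul (8 ^ s * 2 ^ t : ℝ)
        rwa [mul_zero] at this
      have h3 : Tendsto (fun k => ENNReal.ofReal ((8 * δ k) ^ s / (δ k / 2) ^ t)) atTop
          (𝓝 0) := by
        simp only [heq]
        simpa [Function.comp_def] using (ENNReal.continuous_ofReal.tendsto 0).comp h2
      have := ENNReal.Tendsto.mul_const h3 (Or.inr (measure_ne_top μ univ))
      rwa [zero_mul] at this
    refine le_antisymm ?_ zero_le
    calc μH[s] E ≤ _ := main
      _ ≤ liminf (fun k => ENNReal.ofReal ((8 * δ k) ^ s / (δ k / 2) ^ t) * μ univ) atTop :=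
          liminf_le_liminf (Eventually.of_forall hsum)
      _ = 0 := hlim.liminf_eq
  refine dimH_le fun d' hd' => ?_
  by_contra hlt
  push_neg at hlt
  have htd : t < (d' : ℝ) := by
    have h1 : ENNReal.ofReal t < (d' : ℝ≥0∞) := hlt
    rw [ENNReal.ofReal, ENNReal.coe_lt_coe] at h1
    calc t = (t.toNNReal : ℝ) := (Real.coe_toNNReal t ht.le).symm
      _ < (d' : ℝ) := h1
  exact (by simp [claim (d' : ℝ) htd] : ¬ μH[(d':ℝ)] E = ∞) hd'

end Helpers

/-- If a Borel probability measure `μ` on `ℝ^N` has pointwise dimension equal to a constant `d`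
at `μ`-almost every point, then the Hausdorff dimension of `μ`,
`D_H(μ) = inf{α ∈ [0,N] : sup{μ(E) : E Borel, dim_H(E) ≤ α} = 1}`, equals `d`. -/
theorem hausdorffDim_of_measure_eq_of_ae_pointwiseDim {N : ℕ}
    (μ : Measure (EuclideanSpace ℝ (Fin N))) [IsProbabilityMeasure μ] (d : ℝ)
    (h : ∀ᵐ x ∂μ, Tendsto (fun ε : ℝ => Real.log (μ (Metric.ball x ε)).toReal / Real.log ε)
      (𝓝[>] 0) (𝓝 d)) :
    sInf {α : ℝ | α ∈ Set.Icc (0 : ℝ) N ∧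
      (⨆ (E : Set (EuclideanSpace ℝ (Fin N))) (_ : MeasurableSet E)
        (_ : dimH E ≤ ENNReal.ofReal α), μ E) = 1} = d := by
  set X := EuclideanSpace ℝ (Fin N)
  set S := {α : ℝ | α ∈ Set.Icc (0 : ℝ) N ∧
      (⨆ (E : Set X) (_ : MeasurableSet E) (_ : dimH E ≤ ENNReal.ofReal α), μ E) = 1} with hS
  have hne : μ ≠ 0 := IsProbabilityMeasure.ne_zero μ
  haveI : (ae μ).NeBot := ae_neBot.mpr hne
  -- d is nonnegative
  have hd0 : 0 ≤ d := by
    obtain ⟨x, hx⟩ := h.exists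
    refine ge_of_tendsto hx ?_
    filter_upwards [self_mem_nhdsWithin,
      (eventually_lt_nhds one_pos).filter_mono nhdsWithin_le_nhds] with r hr0 hr1
    have hden : Real.log r < 0 := Real.log_neg hr0 hr1
    have hnum : Real.log (μ (ball x r)).toReal ≤ 0 :=
      Real.log_nonpos ENNReal.toReal_nonneg
        (by simpa using ENNReal.toReal_mono one_ne_top (prob_le_one (μ := μ) (s := ball x r)))
    have := div_nonneg (neg_nonneg.2 hnum) (neg_nonneg.2 hden.le)
    rwa [neg_div_neg_eq] at this
  -- N belongs to S
  have hdimuniv : dimH (Set.univ : Set X) ≤ ENNReal.ofReal (N:ℝ) := by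
    rw [Real.dimH_univ_eq_finrank X, finrank_euclideanSpace_fin, ENNReal.ofReal_natCast]
  have hNmem : (N:ℝ) ∈ S := by
    refine ⟨⟨Nat.cast_nonneg N, le_refl _⟩, le_antisymm
      (iSup_le fun E => iSup_le fun _ => iSup_le fun _ => prob_le_one) ?_⟩
    calc (1:ℝ≥0∞) = μ Set.univ := measure_univ.symm
      _ ≤ _ := le_iSup₂_of_le Set.univ MeasurableSet.univ
          (le_iSup (fun _ => μ Set.univ) hdimuniv)
  -- lower bound: every element of S is ≥ d
  have hlow : ∀ α ∈ S, d ≤ α := by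
    rintro α ⟨⟨hα0, hαN⟩, hsup⟩
    by_contra hlt
    push_neg at hlt
    set s := (α + d)/2 with hs
    have hs0 : 0 < s := by simp only [hs]; linarith
    have hsα : α < s := by simp only [hs]; linarith
    have hsd : s < d := by simp only [hs]; linarith
    have h1 : (0:ℝ≥0∞) < ⨆ (E : Set X) (_ : MeasurableSet E)
        (_ : dimH E ≤ ENNReal.ofReal α), μ E := by rw [hsup]; exact zero_lt_one
    rw [lt_iSup_iff] at h1
    obtain ⟨E, hE1⟩ := h1
    rw [lt_iSup_iff] at hE1
    obtain ⟨hEmeas, hE2⟩ := hE1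
    rw [lt_iSup_iff] at hE2
    obtain ⟨hEdim, hEpos⟩ := hE2
    have hae : ∀ᵐ x ∂μ, ∃ n : ℕ, ∀ r : ℝ, 0 < r → r < ((n:ℝ)+1)⁻¹ →
        μ (ball x r) ≤ ENNReal.ofReal (r ^ s) := by
      filter_upwards [h] with x hx
      have hev : ∀ᶠ r in 𝓝[>] (0:ℝ), μ (ball x r) ≤ ENNReal.ofReal (r ^ s) := by
        filter_upwards [hx.eventually (eventually_gt_nhds hsd), self_mem_nhdsWithin,
          (eventually_lt_nhds one_pos).filter_mono nhdsWithin_le_nhds] with r hrs hr0 hr1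
        by_cases hz : μ (ball x r) = 0
        · simp [hz]
        · have hm0 : 0 < (μ (ball x r)).toReal := ENNReal.toReal_pos hz (measure_ne_top μ _)
          have hlogr : Real.log r < 0 := Real.log_neg hr0 hr1
          have hlog : Real.log (μ (ball x r)).toReal < s * Real.log r := by
            have := (lt_div_iff_of_neg hlogr).1 hrs
            linarith
          have hlt2 : (μ (ball x r)).toReal < r ^ s := by
            calc (μ (ball x r)).toReal
                = Real.exp (Real.log (μ (ball x r)).toReal) := (Real.exp_log hm0).symm
              _ < Real.exp (s * Real.log r) := Real.exp_lt_exp.2 hlog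
              _ = r ^ s := by rw [← Real.log_rpow hr0, Real.exp_log (Real.rpow_pos_of_pos hr0 _)]
          calc μ (ball x r) = ENNReal.ofReal (μ (ball x r)).toReal :=
                (ENNReal.ofReal_toReal (measure_ne_top μ _)).symm
            _ ≤ ENNReal.ofReal (r ^ s) := ENNReal.ofReal_le_ofReal hlt2.le
      obtain ⟨w, hw, hsub⟩ := mem_nhdsGT_iff_exists_Ioo_subset.1 hev
      obtain ⟨n, hn⟩ := exists_nat_one_div_lt (Set.mem_Ioi.1 hw)
      refine ⟨n, fun r h0 h1 => hsub ⟨h0, ?_⟩⟩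
      rw [one_div] at hn
      exact h1.trans hn
    set G := {x : X | ∃ n : ℕ, ∀ r : ℝ, 0 < r → r < ((n:ℝ)+1)⁻¹ →
        μ (ball x r) ≤ ENNReal.ofReal (r ^ s)} with hG
    set F : ℕ → Set X := fun n => E ∩ {x | ∀ r : ℝ, 0 < r → r < ((n:ℝ)+1)⁻¹ →
        μ (ball x r) ≤ ENNReal.ofReal (r ^ s)} with hF
    have hcov : E ∩ G ⊆ ⋃ n, F n := by
      rintro x ⟨hxE, ⟨n, hn⟩⟩
      exact Set.mem_iUnion.2 ⟨n, hxE, hn⟩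
    have hGnull : μ Gᶜ = 0 := by
      rw [ae_iff] at hae
      convert hae using 2
      rfl
    have hEG : μ (E ∩ G) = μ E := measure_inter_conull hGnull
    have hex : ∃ n, μ (F n) ≠ 0 := by
      by_contra hc
      push_neg at hc
      have : μ (E ∩ G) = 0 := measure_mono_null hcov (measure_iUnion_null hc)
      rw [hEG] at this
      exact hEpos.ne' this
    obtain ⟨n, hFn⟩ := hex
    have hdim := mass_dist_dimH_ge μ (s := s) (r₀ := ((n:ℝ)+1)⁻¹) hs0 (by positivity)
      (fun x hx r h0 h1 => hx.2 r h0 h1) hFn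
    have hcmp : ENNReal.ofReal s ≤ ENNReal.ofReal α :=
      hdim.trans ((dimH_mono Set.inter_subset_left).trans hEdim)
    rw [ENNReal.ofReal_le_ofReal_iff (by linarith)] at hcmp
    linarith
  -- upper bound: elements of S arbitrarily close to d
  have hub : ∀ ε : ℝ, 0 < ε → ∃ α ∈ S, α ≤ d + ε := by
    intro ε hε
    by_cases hcase : (N:ℝ) ≤ d + ε
    · exact ⟨N, hNmem, hcase⟩
    · push_neg at hcase
      set tt := d + ε/2 with htt
      have htt0 : 0 < tt := by simp only [htt]; linarith
      have htd : d < tt := by simp only [htt]; linarith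
      have httα : tt < d + ε := by simp only [htt]; linarith
      refine ⟨d + ε, ⟨⟨by linarith, by linarith⟩, ?_⟩, le_refl _⟩
      set En : ℕ → Set X := fun n => ⋂ (q : ℚ) (_ : 0 < (q:ℝ)) (_ : (q:ℝ) < ((n:ℝ)+1)⁻¹),
        {x : X | ENNReal.ofReal ((q:ℝ) ^ tt) ≤ μ (ball x (q:ℝ))} with hEn
      have hmeas : ∀ n, MeasurableSet (En n) := by
        intro n
        refine MeasurableSet.iInter fun q => MeasurableSet.iInter fun hq =>
          MeasurableSet.iInter fun hq2 => ?_
        exact measurableSet_le measurable_const (ball_meas_measurable μ (q:ℝ) hq)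
      have hprop : ∀ n, ∀ x ∈ En n, ∀ r : ℝ, 0 < r → r < ((n:ℝ)+1)⁻¹ →
          ENNReal.ofReal ((r/2) ^ tt) ≤ μ (ball x r) := by
        intro n x hx r h0 h1
        obtain ⟨q, hq1, hq2⟩ := exists_rat_btwn (half_lt_self h0)
        have hq0 : 0 < (q:ℝ) := lt_trans (by positivity) hq1
        have hxq : ENNReal.ofReal ((q:ℝ) ^ tt) ≤ μ (ball x (q:ℝ)) := by
          have h3 := Set.mem_iInter.1 hx q
          have h4 := Set.mem_iInter.1 h3 hq0
          exact Set.mem_iInter.1 h4 (hq2.trans h1)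
        calc ENNReal.ofReal ((r/2) ^ tt) ≤ ENNReal.ofReal ((q:ℝ) ^ tt) :=
            ENNReal.ofReal_le_ofReal (Real.rpow_le_rpow (by positivity) hq1.le htt0.le)
          _ ≤ μ (ball x (q:ℝ)) := hxq
          _ ≤ μ (ball x r) := measure_mono (ball_subset_ball hq2.le)
      have hdimn : ∀ n, dimH (En n) ≤ ENNReal.ofReal (d + ε) := fun n =>
        (cover_dimH_le μ htt0 (by positivity : (0:ℝ) < ((n:ℝ)+1)⁻¹) (hprop n)).trans
          (ENNReal.ofReal_le_ofReal (by linarith))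
      have haecov : ∀ᵐ x ∂μ, x ∈ ⋃ n, En n := by
        filter_upwards [h, ae_ball_pos μ] with x hx hpos
        have hev : ∀ᶠ r in 𝓝[>] (0:ℝ), ENNReal.ofReal (r ^ tt) ≤ μ (ball x r) := by
          filter_upwards [hx.eventually (eventually_lt_nhds htd), self_mem_nhdsWithin,
            (eventually_lt_nhds one_pos).filter_mono nhdsWithin_le_nhds] with r hrs hr0 hr1
          have hm0 : 0 < (μ (ball x r)).toReal :=
            ENNReal.toReal_pos (hpos r hr0).ne' (measure_ne_top μ _)
          have hlogr : Real.log r < 0 := Real.log_neg hr0 hr1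
          have hlog : tt * Real.log r < Real.log (μ (ball x r)).toReal := by
            have := (div_lt_iff_of_neg hlogr).1 hrs
            linarith
          have hlt2 : r ^ tt < (μ (ball x r)).toReal := by
            calc r ^ tt = Real.exp (tt * Real.log r) := by
                  rw [← Real.log_rpow hr0, Real.exp_log (Real.rpow_pos_of_pos hr0 _)]
              _ < Real.exp (Real.log (μ (ball x r)).toReal) := Real.exp_lt_exp.2 hlog
              _ = (μ (ball x r)).toReal := Real.exp_log hm0
          calc ENNReal.ofReal (r ^ tt) ≤ ENNReal.ofReal (μ (ball x r)).toReal :=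
              ENNReal.ofReal_le_ofReal hlt2.le
            _ = μ (ball x r) := ENNReal.ofReal_toReal (measure_ne_top μ _)
        obtain ⟨w, hw, hsub⟩ := mem_nhdsGT_iff_exists_Ioo_subset.1 hev
        obtain ⟨n, hn⟩ := exists_nat_one_div_lt (Set.mem_Ioi.1 hw)
        rw [one_div] at hn
        refine Set.mem_iUnion.2 ⟨n, ?_⟩
        exact Set.mem_iInter.2 fun q => Set.mem_iInter.2 fun hq0 => Set.mem_iInter.2
          fun hq2 => hsub ⟨hq0, hq2.trans hn⟩
      have hEnmono : Monotone En := by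
        intro m n hmn x hx
        refine Set.mem_iInter.2 fun q => Set.mem_iInter.2 fun hq0 => Set.mem_iInter.2 fun hq2 => ?_
        have hinv : ((n:ℝ)+1)⁻¹ ≤ ((m:ℝ)+1)⁻¹ := by
          apply inv_anti₀ (by positivity)
          exact_mod_cast Nat.succ_le_succ hmn
        have h3 := Set.mem_iInter.1 hx q
        have h4 := Set.mem_iInter.1 h3 hq0
        exact Set.mem_iInter.1 h4 (hq2.trans_le hinv)
      have hU1 : μ (⋃ n, En n) = 1 := by
        have h1 : μ (⋃ n, En n) = μ (Set.univ : Set X) :=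
          measure_congr (Filter.eventuallyEq_univ.2 haecov)
        rw [h1, measure_univ]
      have hsup1 : (⨆ n, μ (En n)) = 1 := by
        rw [← hU1]
        exact (Directed.measure_iUnion hEnmono.directed_le).symm
      refine le_antisymm (iSup_le fun E => iSup_le fun _ => iSup_le fun _ => prob_le_one) ?_
      rw [← hsup1]
      exact iSup_le fun n => le_iSup₂_of_le (En n) (hmeas n)
        (le_iSup (fun _ => μ (En n)) (hdimn n))
  refine le_antisymm ?_ (le_csInf ⟨(N:ℝ), hNmem⟩ hlow)
  refine le_of_forall_pos_le_add fun ε hε => ?_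
  obtain ⟨α, hαS, hαle⟩ := hub ε hε
  exact (csInf_le ⟨0, fun β hβ => hβ.1.1⟩ hαS).trans hαle
end

section
/- Let (X,ρ) be a compact metric space, let μ be a Borel probability measure on X, and let f : X → X be a locally bi-Lipschitz injection that preserves μ and is ergodic with respect to μ. Suppose the pointwise dimension D_μ(x) exists for μ-almost every x. Then D_μ is constant μ-almost everywhere: there exists d ≥ 0 such that D_μ(x) = d for μ-almost every x ∈ X. -/
open MeasureTheory Filter Metric Topology

/-- A map between metric spaces is locally bi-Lipschitz if around every point there is a ball
on which it distorts distances by at most a factor `K`. -/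
def LocallyBiLipschitz {X Y : Type*} [MetricSpace X] [MetricSpace Y] (f : X → Y) : Prop :=
  ∀ x : X, ∃ r : ℝ, 0 < r ∧ ∃ K : ℝ, 1 ≤ K ∧
    ∀ u ∈ Metric.ball x r, ∀ v ∈ Metric.ball x r,
      (1 / K) * dist u v ≤ dist (f u) (f v) ∧ dist (f u) (f v) ≤ K * dist u v

section Aux

variable {X : Type*} [MetricSpace X]

/-- A locally bi-Lipschitz map is continuous. -/
lemma LocallyBiLipschitz.continuous' {f : X → X} (hbl : LocallyBiLipschitz f) :
    Continuous f := by
  rw [Metric.continuous_iff]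
  intro x ε hε
  obtain ⟨r, hr, K, hK, h⟩ := hbl x
  have hK0 : (0:ℝ) < K := lt_of_lt_of_le one_pos hK
  refine ⟨min r (ε / K), lt_min hr (div_pos hε hK0), fun u hu => ?_⟩
  have hur : u ∈ Metric.ball x r := mem_ball.2 (lt_of_lt_of_le hu (min_le_left _ _))
  calc dist (f u) (f x) ≤ K * dist u x := (h u hur x (mem_ball_self hr)).2
    _ < K * (ε / K) :=
        mul_lt_mul_of_pos_left (lt_of_lt_of_le hu (min_le_right _ _)) hK0
    _ = ε := by field_simp

/-- Uniform continuity of the inverse of a continuous injection on a compact space. -/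
lemma exists_delta_of_injective [CompactSpace X] {f : X → X} (hc : Continuous f)
    (hinj : Function.Injective f) {r : ℝ} (hr : 0 < r) :
    ∃ δ : ℝ, 0 < δ ∧ ∀ u v : X, dist (f u) (f v) < δ → dist u v < r := by
  set C : Set (X × X) := {p | r ≤ dist p.1 p.2} with hC
  have hCc : IsClosed C := isClosed_le continuous_const continuous_dist
  have hCcomp : IsCompact C := hCc.isCompact
  rcases C.eq_empty_or_nonempty with hCe | hCn
  · refine ⟨1, one_pos, fun u v _ => ?_⟩
    by_contra h'
    have hm : (u, v) ∈ C := not_lt.1 h'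
    rw [hCe] at hm
    exact hm
  · obtain ⟨p, hp, hmin⟩ := hCcomp.exists_isMinOn hCn
      ((hc.comp continuous_fst).dist (hc.comp continuous_snd)).continuousOn
    have hp0 : 0 < dist (f p.1) (f p.2) := by
      rw [dist_pos]
      intro he
      have h12 : p.1 = p.2 := hinj he
      have hd : dist p.1 p.2 = 0 := by rw [h12, dist_self]
      have hrp : r ≤ dist p.1 p.2 := hp
      rw [hd] at hrp
      exact absurd hrp (not_le.2 hr)
    refine ⟨_, hp0, fun u v huv => ?_⟩
    by_contra h'
    have hmem : (u, v) ∈ C := not_lt.1 h'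
    have hle : dist (f p.1) (f p.2) ≤ dist (f u) (f v) := hmin hmem
    exact absurd hle (not_le.2 huv)

/-- The measure of a ball is a measurable function of its center. -/
lemma measurable_measure_ball' [MeasurableSpace X] [OpensMeasurableSpace X]
    (μ : Measure X) (ε : ℝ) : Measurable fun x : X => μ (Metric.ball x ε) := by
  apply LowerSemicontinuous.measurable
  intro x c hc
  change c < μ (Metric.ball x ε) at hc
  have hne : (Metric.ball x ε).Nonempty := by
    by_contra h
    rw [Set.not_nonempty_iff_eq_empty] at h
    rw [h] at hc
    simp at hc
  have hε : 0 < ε := by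
    rcases hne with ⟨y, hy⟩
    exact lt_of_le_of_lt dist_nonneg (mem_ball'.1 hy)
  have hmono : Monotone fun n : ℕ => Metric.ball x (ε - 1 / (n + 1)) := by
    intro m n hmn
    apply ball_subset_ball
    have : (1:ℝ) / (n + 1) ≤ 1 / (m + 1) := by
      apply one_div_le_one_div_of_le (by positivity)
      exact_mod_cast Nat.succ_le_succ hmn
    linarith
  have hU : (⋃ n : ℕ, Metric.ball x (ε - 1 / (n + 1))) = Metric.ball x ε := by
    ext y
    simp only [Set.mem_iUnion, mem_ball]
    constructor
    · rintro ⟨n, h⟩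
      have h1 : (0:ℝ) < 1 / (n + 1) := by positivity
      linarith
    · intro h
      obtain ⟨n, hn⟩ := exists_nat_one_div_lt (show (0:ℝ) < ε - dist y x by linarith)
      exact ⟨n, by linarith⟩
  have hsup : μ (Metric.ball x ε) = ⨆ n : ℕ, μ (Metric.ball x (ε - 1 / (n + 1))) := by
    rw [← hU]
    exact Directed.measure_iUnion hmono.directed_le
  rw [hsup] at hc
  obtain ⟨n, hn⟩ := lt_iSup_iff.1 hc
  have hpos : (0:ℝ) < 1 / (n + 1) := by positivity
  filter_upwards [ball_mem_nhds x hpos] with y hy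
  show c < μ (Metric.ball y ε)
  refine lt_of_lt_of_le hn (measure_mono fun z hz => ?_)
  rw [mem_ball] at hz ⊢
  have hxy : dist x y < 1 / (n + 1) := mem_ball'.1 hy
  calc dist z y ≤ dist z x + dist x y := dist_triangle z x y
    _ < (ε - 1 / (n + 1)) + 1 / (n + 1) := add_lt_add hz hxy
    _ = ε := by ring

variable [CompactSpace X] [MeasurableSpace X] [BorelSpace X]

/-- Key comparison: the pointwise dimension at `x` equals that at `f x`. -/
lemma tendsto_dim_of_tendsto_dim_image (μ : Measure X) [IsProbabilityMeasure μ] {f : X → X}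
    (hinj : Function.Injective f) (hbl : LocallyBiLipschitz f)
    (hmp : MeasurePreserving f μ μ) (x : X) {M : ℝ}
    (hM : Tendsto (fun ε : ℝ => Real.log (μ (Metric.ball (f x) ε)).toReal / Real.log ε)
        (𝓝[>] 0) (𝓝 M)) :
    Tendsto (fun ε : ℝ => Real.log (μ (Metric.ball x ε)).toReal / Real.log ε)
        (𝓝[>] 0) (𝓝 M) := by
  obtain ⟨r, hr, K, hK, hb⟩ := hbl x
  have hK0 : (0:ℝ) < K := lt_of_lt_of_le one_pos hK
  obtain ⟨δ, hδ, hδ'⟩ := exists_delta_of_injective hbl.continuous' hinj hr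
  set ε₀ : ℝ := min r (min δ (1 / (2 * K))) with hε₀def
  have hε₀ : 0 < ε₀ := lt_min hr (lt_min hδ (by positivity))
  have hε₀r : ε₀ ≤ r := min_le_left _ _
  have hε₀δ : ε₀ ≤ δ := (min_le_right _ _).trans (min_le_left _ _)
  have hε₀K : ε₀ ≤ 1 / (2 * K) := (min_le_right _ _).trans (min_le_right _ _)
  have h2K : (0:ℝ) < 2 * K := by linarith
  have hε₀lt1 : ε₀ < 1 := by
    have h1 : (1:ℝ) / (2 * K) ≤ 1 / 2 := one_div_le_one_div_of_le two_pos (by linarith)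
    linarith
  -- basic measure comparisons on (0, ε₀)
  have hlow : ∀ ε : ℝ, ε ∈ Set.Ioo 0 ε₀ →
      μ (Metric.ball (f x) (ε / K)) ≤ μ (Metric.ball x ε) := by
    rintro ε ⟨hε1, hε2⟩
    have hsub : f ⁻¹' Metric.ball (f x) (ε / K) ⊆ Metric.ball x ε := by
      intro u hu
      have hd : dist (f u) (f x) < ε / K := mem_ball.1 hu
      have hur : dist u x < r := hδ' u x (lt_of_lt_of_le hd
        (le_trans (div_le_self hε1.le hK) (hε2.le.trans hε₀δ)))
      have := (hb u (mem_ball.2 hur) x (mem_ball_self hr)).1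
      have h2 : (1 / K) * dist u x < ε / K := lt_of_le_of_lt this hd
      rw [mem_ball]
      calc dist u x = K * ((1 / K) * dist u x) := by field_simp
        _ < K * (ε / K) := by exact mul_lt_mul_of_pos_left h2 hK0
        _ = ε := by field_simp
    calc μ (Metric.ball (f x) (ε / K)) = μ (f ⁻¹' Metric.ball (f x) (ε / K)) :=
          (hmp.measure_preimage measurableSet_ball.nullMeasurableSet).symm
      _ ≤ μ (Metric.ball x ε) := measure_mono hsub
  have hupp : ∀ ε : ℝ, ε ∈ Set.Ioo 0 ε₀ →
      μ (Metric.ball x ε) ≤ μ (Metric.ball (f x) (K * ε)) := by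
    rintro ε ⟨hε1, hε2⟩
    have hsub : Metric.ball x ε ⊆ f ⁻¹' Metric.ball (f x) (K * ε) := by
      intro u hu
      have hur : u ∈ Metric.ball x r := mem_ball.2 ((mem_ball.1 hu).trans_le (hε2.le.trans hε₀r))
      have := (hb u hur x (mem_ball_self hr)).2
      rw [Set.mem_preimage, mem_ball]
      exact lt_of_le_of_lt this (mul_lt_mul_of_pos_left (mem_ball.1 hu) hK0)
    calc μ (Metric.ball x ε) ≤ μ (f ⁻¹' Metric.ball (f x) (K * ε)) := measure_mono hsub
      _ = μ (Metric.ball (f x) (K * ε)) :=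
          hmp.measure_preimage measurableSet_ball.nullMeasurableSet
  have hIoo : Set.Ioo (0:ℝ) ε₀ ∈ 𝓝[>] (0:ℝ) := Ioo_mem_nhdsGT_of_mem ⟨le_refl _, hε₀⟩
  by_cases hzero : ∃ ε1 : ℝ, 0 < ε1 ∧ μ (Metric.ball x ε1) = 0
  · obtain ⟨ε1, hε1, h0⟩ := hzero
    -- the function at x is eventually 0
    have hx0 : Tendsto (fun ε : ℝ => Real.log (μ (Metric.ball x ε)).toReal / Real.log ε)
        (𝓝[>] 0) (𝓝 0) := by
      have hev : (fun ε : ℝ => Real.log (μ (Metric.ball x ε)).toReal / Real.log ε)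
          =ᶠ[𝓝[>] (0:ℝ)] fun _ => (0:ℝ) := by
        filter_upwards [Ioo_mem_nhdsGT_of_mem (⟨le_refl _, hε1⟩ : (0:ℝ) ∈ Set.Ico 0 ε1)]
          with ε hε
        have : μ (Metric.ball x ε) = 0 :=
          measure_mono_null (ball_subset_ball hε.2.le) h0
        simp [this]
      exact (tendsto_congr' hev).2 tendsto_const_nhds
    -- the function at f x also tends to 0, so M = 0
    have hfx0 : Tendsto (fun ε : ℝ => Real.log (μ (Metric.ball (f x) ε)).toReal / Real.log ε)
        (𝓝[>] 0) (𝓝 0) := by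
      have hev : (fun ε : ℝ => Real.log (μ (Metric.ball (f x) ε)).toReal / Real.log ε)
          =ᶠ[𝓝[>] (0:ℝ)] fun _ => (0:ℝ) := by
        have hm : (0:ℝ) < min ε1 ε₀ / K := div_pos (lt_min hε1 hε₀) hK0
        filter_upwards [Ioo_mem_nhdsGT_of_mem (⟨le_refl _, hm⟩ : (0:ℝ) ∈ Set.Ico 0 _)]
          with s hs
        have hKs : K * s ∈ Set.Ioo (0:ℝ) ε₀ := by
          constructor
          · exact mul_pos hK0 hs.1
          · have : K * s < K * (min ε1 ε₀ / K) := mul_lt_mul_of_pos_left hs.2 hK0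
            rw [mul_div_cancel₀ _ (ne_of_gt hK0)] at this
            exact this.trans_le (min_le_right _ _)
        have hKs1 : K * s ≤ ε1 := by
          have : K * s < K * (min ε1 ε₀ / K) := mul_lt_mul_of_pos_left hs.2 hK0
          rw [mul_div_cancel₀ _ (ne_of_gt hK0)] at this
          exact this.le.trans (min_le_left _ _)
        have h1 : μ (Metric.ball (f x) (K * s / K)) ≤ μ (Metric.ball x (K * s)) :=
          hlow (K * s) hKs
        have h2 : μ (Metric.ball x (K * s)) = 0 :=
          measure_mono_null (ball_subset_ball hKs1) h0
        have h3 : μ (Metric.ball (f x) s) = 0 := by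
          have : K * s / K = s := by field_simp
          rw [this] at h1
          exact le_antisymm (h1.trans_eq h2) zero_le
        simp [h3]
      exact (tendsto_congr' hev).2 tendsto_const_nhds
    have hM0 : M = 0 := tendsto_nhds_unique hM hfx0
    rw [hM0]
    exact hx0
  · push_neg at hzero
    -- all relevant ball measures are positive; set up the squeeze
    have hposx : ∀ ε : ℝ, 0 < ε → μ (Metric.ball x ε) ≠ 0 := hzero
    -- lower bounding function tends to M
    have hmulK : Tendsto (fun ε : ℝ => K * ε) (𝓝[>] 0) (𝓝[>] 0) := by
      apply tendsto_nhdsWithin_of_tendsto_nhds_of_eventually_within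
      · have : Tendsto (fun ε : ℝ => K * ε) (𝓝 0) (𝓝 (K * 0)) :=
          (continuous_const.mul continuous_id).tendsto 0
        rw [mul_zero] at this
        exact this.mono_left nhdsWithin_le_nhds
      · filter_upwards [self_mem_nhdsWithin] with ε (hε : (0:ℝ) < ε)
        exact Set.mem_Ioi.2 (by positivity)
    have hdivK : Tendsto (fun ε : ℝ => ε / K) (𝓝[>] 0) (𝓝[>] 0) := by
      apply tendsto_nhdsWithin_of_tendsto_nhds_of_eventually_within
      · have : Tendsto (fun ε : ℝ => ε / K) (𝓝 0) (𝓝 (0 / K)) :=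
          (continuous_id.div_const K).tendsto 0
        rw [zero_div] at this
        exact this.mono_left nhdsWithin_le_nhds
      · filter_upwards [self_mem_nhdsWithin] with ε (hε : (0:ℝ) < ε)
        exact Set.mem_Ioi.2 (by positivity)
    have hloginv : Tendsto (fun ε : ℝ => (Real.log ε)⁻¹) (𝓝[>] 0) (𝓝 0) := by
      have h1 : Tendsto (fun ε : ℝ => -Real.log ε) (𝓝[>] 0) atTop :=
        tendsto_neg_atBot_atTop.comp Real.tendsto_log_nhdsGT_zero
      have h2 : Tendsto (fun ε : ℝ => (-Real.log ε)⁻¹) (𝓝[>] 0) (𝓝 0) :=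
        h1.inv_tendsto_atTop
      have h3 := h2.neg
      rw [neg_zero] at h3
      refine h3.congr fun ε => ?_
      rw [inv_neg, neg_neg]
    -- ratio of logs tends to 1 for scaled radius
    have hratio : ∀ c : ℝ, 0 < c →
        Tendsto (fun ε : ℝ => Real.log (c * ε) / Real.log ε) (𝓝[>] 0) (𝓝 1) := by
      intro c hc
      have hev : (fun ε : ℝ => Real.log (c * ε) / Real.log ε)
          =ᶠ[𝓝[>] (0:ℝ)] fun ε => Real.log c * (Real.log ε)⁻¹ + 1 := by
        filter_upwards [Ioo_mem_nhdsGT_of_mem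
          (⟨le_refl _, one_half_pos⟩ : (0:ℝ) ∈ Set.Ico 0 (1/2))] with ε hε
        have hεpos : 0 < ε := hε.1
        have hlogne : Real.log ε ≠ 0 :=
          ne_of_lt (Real.log_neg hεpos (by linarith [hε.2]))
        rw [Real.log_mul (ne_of_gt hc) (ne_of_gt hεpos)]
        field_simp
      rw [tendsto_congr' hev]
      have : Tendsto (fun ε : ℝ => Real.log c * (Real.log ε)⁻¹ + 1) (𝓝[>] 0)
          (𝓝 (Real.log c * 0 + 1)) :=
        ((tendsto_const_nhds.mul hloginv).add tendsto_const_nhds)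
      simpa using this
    -- bounding functions
    have hlowlim : Tendsto
        (fun ε : ℝ => Real.log (μ (Metric.ball (f x) (K * ε))).toReal / Real.log ε)
        (𝓝[>] 0) (𝓝 M) := by
      have hprod : Tendsto (fun ε : ℝ =>
          (Real.log (μ (Metric.ball (f x) (K * ε))).toReal / Real.log (K * ε)) *
            (Real.log (K * ε) / Real.log ε)) (𝓝[>] 0) (𝓝 (M * 1)) :=
        (hM.comp hmulK).mul (hratio K hK0)
      rw [mul_one] at hprod
      refine hprod.congr' ?_
      filter_upwards [hIoo] with ε hε
      have hKε : 0 < K * ε := mul_pos hK0 hε.1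
      have hKεlt : K * ε < 1 := by
        calc K * ε < K * (1 / (2 * K)) :=
              mul_lt_mul_of_pos_left (hε.2.trans_le hε₀K) hK0
          _ = 1 / 2 := by
              rw [mul_one_div, mul_comm 2 K, ← div_div, div_self (ne_of_gt hK0)]
          _ < 1 := by norm_num
      have hlogne : Real.log (K * ε) ≠ 0 := ne_of_lt (Real.log_neg hKε hKεlt)
      field_simp
    have hupplim : Tendsto
        (fun ε : ℝ => Real.log (μ (Metric.ball (f x) (ε / K))).toReal / Real.log ε)
        (𝓝[>] 0) (𝓝 M) := by
      have hprod : Tendsto (fun ε : ℝ =>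
          (Real.log (μ (Metric.ball (f x) (ε / K))).toReal / Real.log (ε / K)) *
            (Real.log (K⁻¹ * ε) / Real.log ε)) (𝓝[>] 0) (𝓝 (M * 1)) :=
        (hM.comp hdivK).mul (hratio K⁻¹ (inv_pos.2 hK0))
      rw [mul_one] at hprod
      have hprod' : Tendsto (fun ε : ℝ =>
          (Real.log (μ (Metric.ball (f x) (ε / K))).toReal / Real.log (ε / K)) *
            (Real.log (ε / K) / Real.log ε)) (𝓝[>] 0) (𝓝 M) := by
        refine hprod.congr (fun ε => ?_)
        rw [show K⁻¹ * ε = ε / K by field_simp]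
      refine hprod'.congr' ?_
      filter_upwards [hIoo] with ε hε
      have hεK : 0 < ε / K := div_pos hε.1 hK0
      have hεKlt : ε / K < 1 := by
        have h1 : ε / K ≤ ε := div_le_self hε.1.le hK
        have h2 : ε < 1 := hε.2.trans hε₀lt1
        linarith
      have hlogne : Real.log (ε / K) ≠ 0 := ne_of_lt (Real.log_neg hεK hεKlt)
      field_simp
    -- the squeeze
    refine tendsto_of_tendsto_of_tendsto_of_le_of_le' hlowlim hupplim ?_ ?_
    · filter_upwards [hIoo] with ε hε
      have hεpos : 0 < ε := hε.1
      have hεlt1 : ε < 1 := hε.2.trans hε₀lt1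
      have hlogneg : Real.log ε < 0 := Real.log_neg hεpos hεlt1
      have hbpos : 0 < (μ (Metric.ball x ε)).toReal :=
        ENNReal.toReal_pos (hposx ε hεpos) (measure_ne_top μ _)
      have hcpos : 0 < (μ (Metric.ball (f x) (K * ε))).toReal :=
        lt_of_lt_of_le hbpos (ENNReal.toReal_le_toReal (measure_ne_top μ _)
          (measure_ne_top μ _) |>.2 (hupp ε hε))
      have hloglog : Real.log (μ (Metric.ball x ε)).toReal ≤
          Real.log (μ (Metric.ball (f x) (K * ε))).toReal :=
        Real.log_le_log hbpos (ENNReal.toReal_le_toReal (measure_ne_top μ _)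
          (measure_ne_top μ _) |>.2 (hupp ε hε))
      exact div_le_div_of_nonpos_of_le hlogneg.le hloglog
    · filter_upwards [hIoo] with ε hε
      have hεpos : 0 < ε := hε.1
      have hεlt1 : ε < 1 := hε.2.trans hε₀lt1
      have hlogneg : Real.log ε < 0 := Real.log_neg hεpos hεlt1
      -- positivity of μ (ball (f x) (ε / K))
      have h1K : (1:ℝ) ≤ K * K := by nlinarith
      have hεK2 : ε / (K * K) ∈ Set.Ioo (0:ℝ) ε₀ :=
        ⟨div_pos hεpos (mul_pos hK0 hK0), (div_le_self hεpos.le h1K).trans_lt hε.2⟩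
      have hsub2 : Metric.ball x (ε / (K * K)) ⊆ f ⁻¹' Metric.ball (f x) (ε / K) := by
        intro u hu
        have hur : u ∈ Metric.ball x r :=
          mem_ball.2 ((mem_ball.1 hu).trans_le (hεK2.2.le.trans hε₀r))
        have := (hb u hur x (mem_ball_self hr)).2
        rw [Set.mem_preimage, mem_ball]
        calc dist (f u) (f x) ≤ K * dist u x := this
          _ < K * (ε / (K * K)) := mul_lt_mul_of_pos_left (mem_ball.1 hu) hK0
          _ = ε / K := by field_simp
      have hapos' : μ (Metric.ball x (ε / (K * K))) ≤ μ (Metric.ball (f x) (ε / K)) := by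
        calc μ (Metric.ball x (ε / (K * K))) ≤ μ (f ⁻¹' Metric.ball (f x) (ε / K)) :=
              measure_mono hsub2
          _ = μ (Metric.ball (f x) (ε / K)) :=
              hmp.measure_preimage measurableSet_ball.nullMeasurableSet
      have hapos : 0 < (μ (Metric.ball (f x) (ε / K))).toReal := by
        have h1 : 0 < (μ (Metric.ball x (ε / (K * K)))).toReal :=
          ENNReal.toReal_pos (hposx _ hεK2.1) (measure_ne_top μ _)
        exact lt_of_lt_of_le h1 (ENNReal.toReal_le_toReal (measure_ne_top μ _)
          (measure_ne_top μ _) |>.2 hapos')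
      have hloglog : Real.log (μ (Metric.ball (f x) (ε / K))).toReal ≤
          Real.log (μ (Metric.ball x ε)).toReal :=
        Real.log_le_log hapos (ENNReal.toReal_le_toReal (measure_ne_top μ _)
          (measure_ne_top μ _) |>.2 (hlow ε hε))
      exact div_le_div_of_nonpos_of_le hlogneg.le hloglog

end Aux

/-- If `f` is a locally bi-Lipschitz injection on a compact metric space preserving a Borel
probability measure `μ` ergodically, and the pointwise dimension of `μ` exists almost
everywhere, then it is constant almost everywhere. -/
theorem pointwiseDim_ae_const_of_ergodic
    {X : Type*} [MetricSpace X] [CompactSpace X] [MeasurableSpace X] [BorelSpace X]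
    (μ : Measure X) [IsProbabilityMeasure μ] (f : X → X)
    (hinj : Function.Injective f) (hbl : LocallyBiLipschitz f)
    (hmp : MeasurePreserving f μ μ)
    (herg : ∀ A : Set X, MeasurableSet A → f ⁻¹' A = A → μ A = 0 ∨ μ A = 1)
    (hexists : ∀ᵐ x ∂μ, ∃ L : ℝ,
      Tendsto (fun ε : ℝ => Real.log (μ (Metric.ball x ε)).toReal / Real.log ε)
        (𝓝[>] 0) (𝓝 L)) :
    ∃ d : ℝ, 0 ≤ d ∧ ∀ᵐ x ∂μ,
      Tendsto (fun ε : ℝ => Real.log (μ (Metric.ball x ε)).toReal / Real.log ε)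
        (𝓝[>] 0) (𝓝 d) := by
  classical
  set φ : X → ℝ → ℝ := fun x ε => Real.log (μ (Metric.ball x ε)).toReal / Real.log ε with hφ
  -- the auxiliary invariant function
  set G : X → ENNReal := fun x =>
    Filter.limsup (fun n : ℕ => ENNReal.ofReal (φ x (1 / (n + 2)))) atTop with hG
  have hGmeas : Measurable G := by
    apply Measurable.limsup
    intro n
    apply ENNReal.measurable_ofReal.comp
    exact (Real.measurable_log.comp
      ((measurable_measure_ball' μ _).ennreal_toReal)).div_const _
  have hseq : Tendsto (fun n : ℕ => (1:ℝ) / (n + 2)) atTop (𝓝[>] 0) := by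
    apply tendsto_nhdsWithin_of_tendsto_nhds_of_eventually_within
    · have h1 : Tendsto (fun n : ℕ => (n:ℝ) + 2) atTop atTop :=
        tendsto_atTop_add_const_right atTop 2 tendsto_natCast_atTop_atTop
      exact h1.inv_tendsto_atTop.congr (fun n => by simp [one_div])
    · exact Filter.Eventually.of_forall fun n => Set.mem_Ioi.2 (by positivity)
  have hGval : ∀ x : X, ∀ L : ℝ, Tendsto (φ x) (𝓝[>] 0) (𝓝 L) →
      G x = ENNReal.ofReal L := by
    intro x L hL
    have h1 : Tendsto (fun n : ℕ => ENNReal.ofReal (φ x (1 / (n + 2)))) atTop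
        (𝓝 (ENNReal.ofReal L)) :=
      (ENNReal.continuous_ofReal.tendsto L).comp (hL.comp hseq)
    exact h1.limsup_eq
  -- a.e. invariance of G
  have hexf : ∀ᵐ x ∂μ, ∃ L : ℝ, Tendsto (φ (f x)) (𝓝[>] 0) (𝓝 L) :=
    hmp.quasiMeasurePreserving.ae hexists
  have hGinv : G ∘ f =ᵐ[μ] G := by
    filter_upwards [hexf] with x hx
    obtain ⟨M, hM⟩ := hx
    have hMx : Tendsto (φ x) (𝓝[>] 0) (𝓝 M) :=
      tendsto_dim_of_tendsto_dim_image μ hinj hbl hmp x hM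
    calc (G ∘ f) x = ENNReal.ofReal M := hGval (f x) M hM
      _ = G x := (hGval x M hMx).symm
  -- ergodicity
  have herg' : Ergodic f μ := by
    refine ⟨hmp, ⟨fun s hs hfs => ?_⟩⟩
    rw [Filter.eventuallyConst_set']
    rcases herg s hs hfs with h | h
    · exact Or.inl (ae_eq_empty.2 h)
    · exact Or.inr (ae_eq_univ.2 ((prob_compl_eq_zero_iff hs).2 h))
  obtain ⟨c, hc⟩ := herg'.ae_eq_const_of_ae_eq_comp₀ hGmeas.nullMeasurable hGinv
  -- extract a witness to show c ≠ ⊤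
  have hane : (MeasureTheory.ae μ).NeBot := ae_neBot.2 (IsProbabilityMeasure.ne_zero μ)
  have hboth : ∀ᵐ x ∂μ, G x = c ∧ ∃ L : ℝ, Tendsto (φ x) (𝓝[>] 0) (𝓝 L) :=
    hc.and hexists
  obtain ⟨x₀, hx₀c, L₀, hL₀⟩ := hboth.exists
  have hctop : c ≠ ⊤ := by
    rw [← hx₀c, hGval x₀ L₀ hL₀]
    exact ENNReal.ofReal_ne_top
  refine ⟨c.toReal, ENNReal.toReal_nonneg, ?_⟩
  filter_upwards [hboth] with x hx
  obtain ⟨hxc, L, hL⟩ := hx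
  have hL0 : 0 ≤ L := by
    refine ge_of_tendsto hL ?_
    filter_upwards [Ioo_mem_nhdsGT_of_mem
      (⟨le_refl _, one_half_pos⟩ : (0:ℝ) ∈ Set.Ico 0 (1/2))] with ε hε
    have hlog1 : Real.log (μ (Metric.ball x ε)).toReal ≤ 0 := by
      apply Real.log_nonpos ENNReal.toReal_nonneg
      have h1 : (μ (Metric.ball x ε)).toReal ≤ (1 : ENNReal).toReal :=
        ENNReal.toReal_mono ENNReal.one_ne_top prob_le_one
      simpa using h1
    have hlog2 : Real.log ε ≤ 0 := (Real.log_neg hε.1 (by linarith [hε.2])).le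
    exact div_nonneg_of_nonpos hlog1 hlog2
  have hLc : ENNReal.ofReal L = c := by rw [← hGval x L hL, hxc]
  have hLd : L = c.toReal := by
    rw [← hLc, ENNReal.toReal_ofReal hL0]
  rw [← hLd]
  exact hL
end
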